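/- arXiv:1005.2148 — 10 statements merged into one kernel-verified Lean document; each statement's English description precedes it below -/
import Mathlib

section
/- In any n-ary group (G,f), for all x ∈ G and all 1 ≤ k ≤ n, f(x,...,x, x̄, x,...,x) = x, where x̄ is at position k and x appears in all other n−1 positions. -/
namespace NAry

variable {G : Type*} {A : Type*}

/-- One of the ways to compose two applications of an `n`-ary operation on
`2n-1` arguments: the inner application starts at position `i`. -/
def Comp (n : ℕ) (f : (ℕ → G) → G) (x : ℕ → G) (i : ℕ) : G :=
  f (fun k => if k < i then x k else if k = i then f (fun m => x (i + m)) else x (k + n - 1))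

/-- `f` depends only on its first `n` arguments. -/
def DepOn (n : ℕ) (f : (ℕ → G) → G) : Prop :=
  ∀ x y : ℕ → G, (∀ k < n, x k = y k) → f x = f y

/-- Associativity of an `n`-ary operation. -/
def Assoc (n : ℕ) (f : (ℕ → G) → G) : Prop :=
  ∀ (x : ℕ → G) (i j : ℕ), i < n → j < n → Comp n f x i = Comp n f x j

/-- Unique solvability at every place `i < n`. -/
def Solvable (n : ℕ) (f : (ℕ → G) → G) : Prop :=
  ∀ i < n, ∀ (x : ℕ → G) (x₀ : G), ∃! z : G, f (Function.update x i z) = x₀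

/-- `(G, f)` is an `n`-ary (polyadic) group. -/
def IsNAryGroup (n : ℕ) (f : (ℕ → G) → G) : Prop :=
  DepOn n f ∧ Assoc n f ∧ Solvable n f

/-- `sx` is the skew element of `x`: `f(x,…,x,sx) = x` with `n-1` copies of `x`. -/
def IsSkew (n : ℕ) (f : (ℕ → G) → G) (x sx : G) : Prop :=
  f (Function.update (fun _ => x) (n - 1) sx) = x

/-- An action of the `n`-ary group `(G,f)` on a set `A`. -/
def IsAction (n : ℕ) (f : (ℕ → G) → G) (act : G → A → A) : Prop :=
  (∀ (x : ℕ → G) (a : A), act (f x) a = (List.range n).foldr (fun i b => act (x i) b) a)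
  ∧ (∀ a : A, ∃ x : G, act x a = a)
  ∧ (∀ x : G, Function.Bijective (act x))

end NAry

open NAry

theorem skew_identity {G : Type*} (n : ℕ) (hn : 3 ≤ n) (f : (ℕ → G) → G)
    (hG : IsNAryGroup n f) (x sx : G) (hs : IsSkew n f x sx)
    (k : ℕ) (hk : 1 ≤ k) (hkn : k ≤ n) :
    f (Function.update (fun _ => x) (k - 1) sx) = x := by
  obtain ⟨hdep, hassoc, hsolv⟩ := hG
  set p := k - 1 with hpdef
  have hp : p < n := by omega
  set z : ℕ → G := Function.update (fun _ => x) (n - 1 + p) sx with hz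
  have hzval : ∀ j, z j = if j = n - 1 + p then sx else x := by
    intro j; simp [hz, Function.update_apply]
  -- inner block at p equals x
  have hinner1 : f (fun m => z (p + m)) = x := by
    have := hdep (fun m => z (p + m)) (Function.update (fun _ => x) (n - 1) sx) ?_
    · rw [this]; exact hs
    · intro m hm
      simp only [hzval, Function.update_apply]
      by_cases h : m = n - 1
      · simp [h]; omega
      · have : ¬ (p + m = n - 1 + p) := by omega
        simp [this, h]
  -- inner block at n-1 equals u_p
  have hinner2 : f (fun m => z (n - 1 + m)) = f (Function.update (fun _ => x) p sx) := by
    apply hdep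
    intro m hm
    simp only [hzval, Function.update_apply]
    by_cases h : m = p
    · simp [h]
    · have : ¬ (n - 1 + m = n - 1 + p) := by omega
      simp [this, h]
  have h1 : Comp n f z p = f (fun _ => x) := by
    unfold Comp
    congr 1
    funext j
    rw [hinner1]
    split_ifs with h h2
    · rw [hzval]; have : ¬ (j = n - 1 + p) := by omega
      simp [this]
    · rfl
    · rw [hzval]; have : ¬ (j + n - 1 = n - 1 + p) := by omega
      simp [this]
  have h2 : Comp n f z (n - 1)
      = f (Function.update (fun _ => x) (n - 1) (f (Function.update (fun _ => x) p sx))) := by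
    unfold Comp
    congr 1
    funext j
    rw [hinner2, Function.update_apply]
    split_ifs with h h2 h3
    · omega
    · rw [hzval]; have : ¬ (j = n - 1 + p) := by omega
      simp [this]
    · rfl
    · rw [hzval]; have : ¬ (j + n - 1 = n - 1 + p) := by omega
      simp [this]
  have hmain : f (Function.update (fun _ => x) (n - 1) (f (Function.update (fun _ => x) p sx)))
      = f (fun _ => x) := by
    rw [← h2, ← h1]
    exact hassoc z (n - 1) p (by omega) hp
  obtain ⟨w, hw, huniq⟩ := hsolv (n - 1) (by omega) (fun _ => x) (f (fun _ => x))
  have e1 : f (Function.update (fun _ => x) p sx) = w := huniq _ hmain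
  have e2 : x = w := by
    apply huniq
    have : Function.update (fun _ => x) (n - 1) x = fun _ => x :=
      Function.update_eq_self (n - 1) (fun _ => x)
    rw [this]
  rw [e1, ← e2]
end

section
/- Let (G,f) be an n-ary group and a ∈ G. Then the binary operation x ∗ y = f(x, a,...,a, y) (with n−2 copies of a) makes G a group, whose identity element is the skew element ā, and in which the inverse of x is f(ā, x,...,x, x̄, ā) (with n−3 copies of x). -/
open NAry

section Aux
variable {G : Type*} {n : ℕ} {f : (ℕ → G) → G}

private lemma comp_eq (hdep : DepOn n f) (w : ℕ → G) (i : ℕ) (inner : ℕ → G)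
    (hin : ∀ m, m < n → w (i + m) = inner m) (v : G) (hv : f inner = v) (outer : ℕ → G)
    (hout : ∀ k, k < n → outer k = if k < i then w k else if k = i then v else w (k + n - 1)) :
    Comp n f w i = f outer := by
  show f _ = f outer
  refine hdep _ _ fun k hk => ?_
  show (if k < i then w k else if k = i then f (fun m => w (i + m)) else w (k + n - 1)) = outer k
  rw [hout k hk]
  split_ifs with h1 h2
  · rfl
  · exact (hdep _ _ fun m hm => hin m hm).trans hv
  · rfl

private lemma cancel' (hdep : DepOn n f) (hs : Solvable n f) {i : ℕ} (hi : i < n)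
    (p q : ℕ → G) (u v : G) (hpu : p i = u) (hqv : q i = v)
    (hagree : ∀ k, k < n → k ≠ i → p k = q k) (h : f p = f q) : u = v := by
  obtain ⟨z, -, huniq⟩ := hs i hi p (f p)
  have h1 : f (Function.update p i u) = f p := hdep _ _ (fun k _ => by
    rcases eq_or_ne k i with rfl | hne
    · rw [Function.update_self, hpu]
    · rw [Function.update_of_ne hne])
  have h2 : f (Function.update p i v) = f p := by
    rw [h]
    exact hdep _ _ (fun k hk => by
      rcases eq_or_ne k i with rfl | hne
      · rw [Function.update_self, hqv]
      · rw [Function.update_of_ne hne]; exact hagree k hk hne)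
  rw [huniq u h1, huniq v h2]

private lemma lft (hdep : DepOn n f) (hassoc : Assoc n f) (hsolv : Solvable n f)
    (hn : 3 ≤ n) {x sx : G} (hskx : f (fun k => if k = n - 1 then sx else x) = x) (y : G) :
    f (fun k => if k = 0 then sx else if k = n - 1 then y else x) = y := by
  have h := hassoc (fun k => if k = n - 1 then sx else if k = 2 * n - 2 then y else x)
    0 (n - 1) (by omega) (by omega)
  rw [comp_eq hdep _ 0 (fun k => if k = n - 1 then sx else x)
        (by intro m hm; beta_reduce; split_ifs <;> first | rfl | (exfalso; omega))
        x hskx (fun k => if k = n - 1 then y else x)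
        (by intro k hk; beta_reduce; split_ifs <;> first | rfl | (exfalso; omega)),
      comp_eq hdep _ (n - 1) (fun k => if k = 0 then sx else if k = n - 1 then y else x)
        (by intro m hm; beta_reduce; split_ifs <;> first | rfl | (exfalso; omega))
        _ rfl
        (fun k => if k = n - 1 then f (fun k => if k = 0 then sx else if k = n - 1 then y else x) else x)
        (by intro k hk; beta_reduce; split_ifs <;> first | rfl | (exfalso; omega))] at h
  exact (cancel' hdep hsolv (show n - 1 < n by omega)
    (fun k => if k = n - 1 then y else x)
    (fun k => if k = n - 1 then f (fun k => if k = 0 then sx else if k = n - 1 then y else x) else x)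
    y _
    (by beta_reduce; split_ifs <;> first | rfl | (exfalso; omega))
    (by beta_reduce; split_ifs <;> first | rfl | (exfalso; omega))
    (fun k hk hne => by beta_reduce; split_ifs <;> first | rfl | (exfalso; omega)) h).symm

private lemma rgt (hdep : DepOn n f) (hassoc : Assoc n f) (hsolv : Solvable n f)
    (hn : 3 ≤ n) {x sx : G} (hskx : f (fun k => if k = n - 1 then sx else x) = x) (z : G) :
    f (fun k => if k = 0 then z else if k = n - 1 then sx else x) = z := by
  have h := hassoc (fun k => if k = 0 then z else if k = n - 1 then sx else x)
    0 (n - 1) (by omega) (by omega)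
  rw [comp_eq hdep _ 0 (fun k => if k = 0 then z else if k = n - 1 then sx else x)
        (by intro m hm; beta_reduce; split_ifs <;> first | rfl | (exfalso; omega))
        _ rfl
        (fun k => if k = 0 then f (fun k => if k = 0 then z else if k = n - 1 then sx else x) else x)
        (by intro k hk; beta_reduce; split_ifs <;> first | rfl | (exfalso; omega)),
      comp_eq hdep _ (n - 1) (fun k => if k = 0 then sx else if k = n - 1 then x else x)
        (by intro m hm; beta_reduce; split_ifs <;> first | rfl | (exfalso; omega))
        x (lft hdep hassoc hsolv hn hskx x)
        (fun k => if k = 0 then z else x)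
        (by intro k hk; beta_reduce; split_ifs <;> first | rfl | (exfalso; omega))] at h
  exact cancel' hdep hsolv (show 0 < n by omega)
    (fun k => if k = 0 then f (fun k => if k = 0 then z else if k = n - 1 then sx else x) else x)
    (fun k => if k = 0 then z else x)
    _ z
    (by beta_reduce; split_ifs <;> first | rfl | (exfalso; omega))
    (by beta_reduce; split_ifs <;> first | rfl | (exfalso; omega))
    (fun k hk hne => by beta_reduce; split_ifs <;> first | rfl | (exfalso; omega)) h

private lemma tmid (hdep : DepOn n f) (hassoc : Assoc n f) (hsolv : Solvable n f)
    (hn : 3 ≤ n) {x sx : G} (hskx : f (fun k => if k = n - 1 then sx else x) = x) (y : G) :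
    f (fun k => if k = n - 2 then sx else if k = n - 1 then y else x) = y := by
  have h := hassoc (fun k => if k = n - 2 then sx else if k = 2 * n - 3 then sx else if k = 2 * n - 2 then y else x)
    (n - 1) (n - 2) (by omega) (by omega)
  rw [comp_eq hdep _ (n - 1) (fun k => if k = n - 2 then sx else if k = n - 1 then y else x)
        (by intro m hm; beta_reduce; split_ifs <;> first | rfl | (exfalso; omega))
        _ rfl
        (fun k => if k = n - 2 then sx else if k = n - 1 then f (fun k => if k = n - 2 then sx else if k = n - 1 then y else x) else x)
        (by intro k hk; beta_reduce; split_ifs <;> first | rfl | (exfalso; omega)),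
      comp_eq hdep _ (n - 2) (fun k => if k = 0 then sx else if k = n - 1 then sx else x)
        (by intro m hm; beta_reduce; split_ifs <;> first | rfl | (exfalso; omega))
        sx (lft hdep hassoc hsolv hn hskx sx)
        (fun k => if k = n - 2 then sx else if k = n - 1 then y else x)
        (by intro k hk; beta_reduce; split_ifs <;> first | rfl | (exfalso; omega))] at h
  exact cancel' hdep hsolv (show n - 1 < n by omega)
    (fun k => if k = n - 2 then sx else if k = n - 1 then f (fun k => if k = n - 2 then sx else if k = n - 1 then y else x) else x)
    (fun k => if k = n - 2 then sx else if k = n - 1 then y else x)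
    _ y
    (by beta_reduce; split_ifs <;> first | rfl | (exfalso; omega))
    (by beta_reduce; split_ifs <;> first | rfl | (exfalso; omega))
    (fun k hk hne => by beta_reduce; split_ifs <;> first | rfl | (exfalso; omega)) h

private lemma dmid (hdep : DepOn n f) (hassoc : Assoc n f) (hsolv : Solvable n f)
    (hn : 3 ≤ n) {x sx : G} (hskx : f (fun k => if k = n - 1 then sx else x) = x) (z : G) :
    f (fun k => if k = 0 then z else if k = n - 2 then sx else x) = z := by
  have h := hassoc (fun k => if k = 0 then z else if k = n - 2 then sx else if k = 2 * n - 3 then sx else x)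
    0 (n - 1) (by omega) (by omega)
  rw [comp_eq hdep _ 0 (fun k => if k = 0 then z else if k = n - 2 then sx else x)
        (by intro m hm; beta_reduce; split_ifs <;> first | rfl | (exfalso; omega))
        _ rfl
        (fun k => if k = 0 then f (fun k => if k = 0 then z else if k = n - 2 then sx else x) else if k = n - 2 then sx else x)
        (by intro k hk; beta_reduce; split_ifs <;> first | rfl | (exfalso; omega)),
      comp_eq hdep _ (n - 1) (fun k => if k = n - 2 then sx else if k = n - 1 then x else x)
        (by intro m hm; beta_reduce; split_ifs <;> first | rfl | (exfalso; omega))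
        x (tmid hdep hassoc hsolv hn hskx x)
        (fun k => if k = 0 then z else if k = n - 2 then sx else x)
        (by intro k hk; beta_reduce; split_ifs <;> first | rfl | (exfalso; omega))] at h
  exact cancel' hdep hsolv (show 0 < n by omega)
    (fun k => if k = 0 then f (fun k => if k = 0 then z else if k = n - 2 then sx else x) else if k = n - 2 then sx else x)
    (fun k => if k = 0 then z else if k = n - 2 then sx else x)
    _ z
    (by beta_reduce; split_ifs <;> first | rfl | (exfalso; omega))
    (by beta_reduce; split_ifs <;> first | rfl | (exfalso; omega))
    (fun k hk hne => by beta_reduce; split_ifs <;> first | rfl | (exfalso; omega)) h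

end Aux

set_option maxHeartbeats 1600000 in
theorem retract_is_group {G : Type*} (n : ℕ) (hn : 3 ≤ n) (f : (ℕ → G) → G)
    (hG : IsNAryGroup n f) (a : G) (sk : G → G) (hsk : ∀ x, IsSkew n f x (sk x)) :
    let op : G → G → G := fun x y => f (fun k => if k = 0 then x else if k = n - 1 then y else a)
    let inv : G → G := fun x =>
      f (fun k => if k = 0 then sk a else if k = n - 2 then sk x else if k = n - 1 then sk a else x)
    (∀ x y z, op (op x y) z = op x (op y z)) ∧
    (∀ x, op (sk a) x = x) ∧ (∀ x, op x (sk a) = x) ∧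
    (∀ x, op x (inv x) = sk a) ∧ (∀ x, op (inv x) x = sk a) := by
  obtain ⟨hdep, hassoc, hsolv⟩ := hG
  have hskp : ∀ x : G, f (fun k => if k = n - 1 then sk x else x) = x := fun x => by
    have h : f (Function.update (fun _ => x) (n - 1) (sk x)) = x := hsk x
    refine Eq.trans (hdep _ _ fun k hk => ?_) h
    simp [Function.update_apply]
  refine ⟨fun x y z => ?_, fun x => lft hdep hassoc hsolv hn (hskp a) x,
    fun x => rgt hdep hassoc hsolv hn (hskp a) x, fun x => ?_, fun x => ?_⟩
  · -- associativity
    have h := hassoc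
      (fun k => if k = 0 then x else if k = n - 1 then y else if k = 2 * n - 2 then z else a)
      0 (n - 1) (by omega) (by omega)
    rw [comp_eq hdep _ 0 (fun k => if k = 0 then x else if k = n - 1 then y else a)
          (by intro m hm; beta_reduce; split_ifs <;> first | rfl | (exfalso; omega))
          _ rfl
          (fun k => if k = 0 then
              f (fun k => if k = 0 then x else if k = n - 1 then y else a)
            else if k = n - 1 then z else a)
          (by intro k hk; beta_reduce; split_ifs <;> first | rfl | (exfalso; omega)),
        comp_eq hdep _ (n - 1) (fun k => if k = 0 then y else if k = n - 1 then z else a)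
          (by intro m hm; beta_reduce; split_ifs <;> first | rfl | (exfalso; omega))
          _ rfl
          (fun k => if k = 0 then x else if k = n - 1 then
              f (fun k => if k = 0 then y else if k = n - 1 then z else a)
            else a)
          (by intro k hk; beta_reduce; split_ifs <;> first | rfl | (exfalso; omega))] at h
    exact h
  · -- right inverse
    have h := hassoc
      (fun k => if k = 0 then x else if k < n - 1 then a else if k = n - 1 then sk a
        else if k = 2 * n - 3 then sk x else if k = 2 * n - 2 then sk a else x)
      (n - 1) 0 (by omega) (by omega)
    rw [comp_eq hdep _ (n - 1)
          (fun k => if k = 0 then sk a else if k = n - 2 then sk x else if k = n - 1 then sk a else x)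
          (by intro m hm; beta_reduce; split_ifs <;> first | rfl | (exfalso; omega))
          _ rfl
          (fun k => if k = 0 then x else if k = n - 1 then
              f (fun k => if k = 0 then sk a else if k = n - 2 then sk x else if k = n - 1 then sk a else x)
            else a)
          (by intro k hk; beta_reduce; split_ifs <;> first | rfl | (exfalso; omega)),
        comp_eq hdep _ 0 (fun k => if k = 0 then x else if k = n - 1 then sk a else a)
          (by intro m hm; beta_reduce; split_ifs <;> first | rfl | (exfalso; omega))
          x (rgt hdep hassoc hsolv hn (hskp a) x)
          (fun k => if k = n - 2 then sk x else if k = n - 1 then sk a else x)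
          (by intro k hk; beta_reduce; split_ifs <;> first | rfl | (exfalso; omega))] at h
    exact h.trans (tmid hdep hassoc hsolv hn (hskp x) (sk a))
  · -- left inverse
    have h := hassoc
      (fun k => if k = 0 then sk a else if k = n - 2 then sk x else if k = n - 1 then sk a
        else if k = 2 * n - 2 then x else if k < n then x else a)
      0 (n - 1) (by omega) (by omega)
    rw [comp_eq hdep _ 0
          (fun k => if k = 0 then sk a else if k = n - 2 then sk x else if k = n - 1 then sk a else x)
          (by intro m hm; beta_reduce; split_ifs <;> first | rfl | (exfalso; omega))
          _ rfl
          (fun k => if k = 0 then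
              f (fun k => if k = 0 then sk a else if k = n - 2 then sk x else if k = n - 1 then sk a else x)
            else if k = n - 1 then x else a)
          (by intro k hk; beta_reduce; split_ifs <;> first | rfl | (exfalso; omega)),
        comp_eq hdep _ (n - 1) (fun k => if k = 0 then sk a else if k = n - 1 then x else a)
          (by intro m hm; beta_reduce; split_ifs <;> first | rfl | (exfalso; omega))
          x (lft hdep hassoc hsolv hn (hskp a) x)
          (fun k => if k = 0 then sk a else if k = n - 2 then sk x else x)
          (by intro k hk; beta_reduce; split_ifs <;> first | rfl | (exfalso; omega))] at h
    exact h.trans (dmid hdep hassoc hsolv hn (hskp x) (sk a))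
end

section
/- A semiabelian n-ary group is medial: if there exists a ∈ G with f(x,a,...,a,y) = f(y,a,...,a,x) for all x,y (equivalently, f(x_1,...,x_n) = f(x_n,x_2,...,x_{n-1},x_1) holds identically), then f(f(x_{11},...,x_{1n}), ..., f(x_{n1},...,x_{nn})) = f(f(x_{11},...,x_{n1}), ..., f(x_{1n},...,x_{nn})) for any n×n matrix of elements (x_{ij}). -/
open NAry

section Aux
variable {G : Type*}

/-- Collapse the window `[i, i+n)` of `x` into a single entry `f (x|window)`. -/
def cls (n : ℕ) (f : (ℕ → G) → G) (i : ℕ) (x : ℕ → G) : ℕ → G :=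
  fun k => if k < i then x k else if k = i then f (fun m => x (i + m)) else x (k + n - 1)

/-- Iterated composition: `LL n f k` consumes `n + k*(n-1)` arguments. -/
def LL (n : ℕ) (f : (ℕ → G) → G) : ℕ → (ℕ → G) → G
  | 0 => f
  | (k+1) => fun x => LL n f k (cls n f 0 x)

/-- Swap the values of `x` at positions `p` and `q`. -/
def swF (p q : ℕ) (x : ℕ → G) : ℕ → G :=
  fun k => if k = p then x q else if k = q then x p else x k

variable {n : ℕ} {f : (ℕ → G) → G}

lemma comp_eq_s6 (i : ℕ) (x : ℕ → G) : Comp n f x i = f (cls n f i x) := rfl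

lemma cls_lt {i k : ℕ} (h : k < i) (x : ℕ → G) : cls n f i x k = x k := by
  simp only [cls]; rw [if_pos h]

lemma cls_self (i : ℕ) (x : ℕ → G) : cls n f i x i = f (fun m => x (i + m)) := by
  simp [cls]

lemma cls_gt {i k : ℕ} (h : i < k) (x : ℕ → G) : cls n f i x k = x (k + n - 1) := by
  simp only [cls]; rw [if_neg (by omega), if_neg (by omega)]

lemma genAssoc (hn : 3 ≤ n) (hdep : DepOn n f) (ha : Assoc n f) :
    ∀ (k p : ℕ) (x : ℕ → G), p ≤ (k+1)*(n-1) → LL n f (k+1) x = LL n f k (cls n f p x) := by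
  intro k
  induction k with
  | zero =>
    intro p x hp
    have h := (ha x 0 p (by omega) (by omega))
    rw [comp_eq_s6, comp_eq_s6] at h
    exact h
  | succ k ih =>
    intro p x hp
    rcases Nat.lt_or_ge p n with hpn | hpn
    · have key : cls n f 0 (cls n f p x) = cls n f 0 (cls n f 0 x) := by
        funext j
        rcases Nat.eq_zero_or_pos j with rfl | hj
        · rw [cls_self, cls_self]
          have e1 : (fun m => cls n f p x (0 + m)) = cls n f p x := by
            funext m; rw [Nat.zero_add]
          have e2 : (fun m => cls n f 0 x (0 + m)) = cls n f 0 x := by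
            funext m; rw [Nat.zero_add]
          rw [e1, e2]
          have h := ha x p 0 hpn (by omega)
          rw [comp_eq_s6, comp_eq_s6] at h
          exact h
        · rw [cls_gt hj, cls_gt hj, cls_gt (show p < j + n - 1 by omega),
            cls_gt (show 0 < j + n - 1 by omega)]
      show LL n f k (cls n f 0 (cls n f 0 x)) = LL n f k (cls n f 0 (cls n f p x))
      rw [key]
    · have hexp : (k+1+1)*(n-1) = (k+1)*(n-1) + (n-1) := by ring
      have hq : p - (n-1) ≤ (k+1)*(n-1) := by omega
      have hq1 : 1 ≤ p - (n-1) := by omega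
      have key : cls n f (p-(n-1)) (cls n f 0 x) = cls n f 0 (cls n f p x) := by
        funext j
        rcases Nat.lt_trichotomy j (p-(n-1)) with h | h | h
        · rcases Nat.eq_zero_or_pos j with rfl | hj
          · rw [cls_lt h, cls_self, cls_self]
            refine hdep _ _ fun m hm => ?_
            simp [cls, show m < p from by omega]
          · rw [cls_lt h, cls_gt hj, cls_gt (show 0 < j by omega),
              cls_lt (show j + n - 1 < p by omega)]
        · subst h
          rw [cls_self, cls_gt (show 0 < p - (n-1) by omega)]
          rw [show p - (n-1) + n - 1 = p by omega, cls_self]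
          congr 1
          funext m
          rw [cls_gt (show 0 < p - (n-1) + m by omega)]
          congr 1
          omega
        · rw [cls_gt h, cls_gt (show 0 < j + n - 1 by omega),
            cls_gt (show 0 < j by omega), cls_gt (show p < j + n - 1 by omega)]
      calc LL n f (k+1+1) x
          = LL n f k (cls n f (p-(n-1)) (cls n f 0 x)) := ih (p-(n-1)) (cls n f 0 x) hq
        _ = LL n f k (cls n f 0 (cls n f p x)) := by rw [key]
        _ = LL n f (k+1) (cls n f p x) := rfl

lemma swap_adj (hn : 3 ≤ n) (hdep : DepOn n f) (ha : Assoc n f)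
    (hsemi : ∀ x : ℕ → G,
      f x = f (fun k => if k = 0 then x (n - 1) else if k = n - 1 then x 0 else x k))
    (k p : ℕ) (x : ℕ → G) (hp : p ≤ (k+1)*(n-1)) :
    LL n f (k+1) x = LL n f (k+1) (swF p (p+(n-1)) x) := by
  rw [genAssoc hn hdep ha k p x hp, genAssoc hn hdep ha k p _ hp]
  congr 1
  funext j
  rcases Nat.lt_trichotomy j p with h | h | h
  · rw [cls_lt h, cls_lt h]
    simp only [swF]
    rw [if_neg (by omega), if_neg (by omega)]
  · subst h
    rw [cls_self, cls_self]
    rw [hsemi (fun m => x (j + m))]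
    congr 1
    funext m
    simp only [swF]
    split_ifs <;> first | rfl | omega | (congr 1; omega)
  · rw [cls_gt h, cls_gt h]
    simp only [swF]
    rw [if_neg (by omega), if_neg (by omega)]

lemma swF_conj {p b c : ℕ} (hpb : p ≠ b) (hbc : b ≠ c) (hpc : p ≠ c) (x : ℕ → G) :
    swF p b (swF b c (swF p b x)) = swF p c x := by
  funext j
  simp only [swF]
  split_ifs <;> first | rfl | omega | (congr 1; omega)

lemma swap_gen (hn : 3 ≤ n) (hdep : DepOn n f) (ha : Assoc n f)
    (hsemi : ∀ x : ℕ → G,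
      f x = f (fun k => if k = 0 then x (n - 1) else if k = n - 1 then x 0 else x k)) :
    ∀ (d k p : ℕ) (x : ℕ → G), p + (d+1)*(n-1) ≤ (k+2)*(n-1) →
      LL n f (k+1) x = LL n f (k+1) (swF p (p + (d+1)*(n-1)) x) := by
  intro d
  induction d with
  | zero =>
    intro k p x h
    have hexp : (k+2)*(n-1) = (k+1)*(n-1) + (n-1) := by ring
    have h1 : p ≤ (k+1)*(n-1) := by omega
    simpa using swap_adj hn hdep ha hsemi k p x h1
  | succ d ih =>
    intro k p x h
    have hexp : (k+2)*(n-1) = (k+1)*(n-1) + (n-1) := by ring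
    have hexp2 : (d+1+1)*(n-1) = (d+1)*(n-1) + (n-1) := by ring
    have hb : p ≤ (k+1)*(n-1) := by omega
    have h2 : (p + (n-1)) + (d+1)*(n-1) ≤ (k+2)*(n-1) := by omega
    have hckey : (p + (n-1)) + (d+1)*(n-1) = p + (d+1+1)*(n-1) := by omega
    have hpos : 1*(n-1) ≤ (d+1)*(n-1) := Nat.mul_le_mul_right _ (by omega)
    calc LL n f (k+1) x
        = LL n f (k+1) (swF p (p+(n-1)) x) := swap_adj hn hdep ha hsemi k p x hb
      _ = LL n f (k+1) (swF (p+(n-1)) ((p+(n-1)) + (d+1)*(n-1)) (swF p (p+(n-1)) x)) :=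
          ih k (p+(n-1)) _ h2
      _ = LL n f (k+1) (swF p (p+(n-1))
            (swF (p+(n-1)) ((p+(n-1)) + (d+1)*(n-1)) (swF p (p+(n-1)) x))) :=
          swap_adj hn hdep ha hsemi k p _ hb
      _ = LL n f (k+1) (swF p ((p+(n-1)) + (d+1)*(n-1)) x) := by
          rw [swF_conj (by omega) (by omega) (by omega)]
      _ = LL n f (k+1) (swF p (p + (d+1+1)*(n-1)) x) := by rw [hckey]

lemma LL_dep (hn : 3 ≤ n) (hdep : DepOn n f) :
    ∀ (k : ℕ) (x y : ℕ → G), (∀ m, m < n + k*(n-1) → x m = y m) → LL n f k x = LL n f k y := by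
  intro k
  induction k with
  | zero => exact fun x y h => hdep x y (fun m hm => h m (by omega))
  | succ k ih =>
    intro x y h
    have hexp : (k+1)*(n-1) = k*(n-1) + (n-1) := by ring
    refine ih _ _ fun m hm => ?_
    rcases Nat.eq_zero_or_pos m with rfl | hm1
    · rw [cls_self, cls_self]
      refine hdep _ _ fun j hj => ?_
      simp only [Nat.zero_add]
      exact h j (by omega)
    · rw [cls_gt hm1, cls_gt hm1]
      exact h _ (by omega)

lemma LL_rows (hn : 3 ≤ n) (hdep : DepOn n f) (ha : Assoc n f) (y : ℕ → G) :
    LL n f n y = f (fun i => f (fun j => y (i*n + j))) := by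
  have key : ∀ t, t ≤ n → LL n f n y = LL n f (n - t)
      (fun k => if k < t then f (fun j => y (k*n + j)) else y (k + t*(n-1))) := by
    intro t
    induction t with
    | zero =>
      intro _
      have e : (fun k => if k < 0 then f (fun j => y (k*n + j)) else y (k + 0*(n-1))) = y := by
        funext k; simp
      rw [Nat.sub_zero, e]
    | succ t ih =>
      intro ht
      rw [ih (by omega)]
      have hnt : n - t = (n - t - 1) + 1 := by omega
      rw [hnt]
      have hmul : 1*(n-1) ≤ (n-t-1+1)*(n-1) := Nat.mul_le_mul_right _ (by omega)
      rw [genAssoc hn hdep ha (n-t-1) t _ (by omega)]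
      have hidx : n - (t+1) = n - t - 1 := by omega
      rw [hidx]
      congr 1
      funext j
      have hmul2 : (t+1)*(n-1) = t*(n-1) + (n-1) := by ring
      rcases Nat.lt_trichotomy j t with h | h | h
      · rw [cls_lt h]
        simp only [if_pos h, if_pos (show j < t + 1 by omega)]
      · subst h
        rw [cls_self]
        simp only [if_pos (show j < j + 1 by omega), if_neg (show ¬ j < j by omega)]
        congr 1
        funext m
        simp only [if_neg (show ¬ j + m < j by omega)]
        congr 1
        have hmul3 : j*n = j*(n-1) + j := by
          have h0 : n - 1 + 1 = n := by omega
          conv_lhs => rw [← h0]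
          ring
        omega
      · rw [cls_gt h]
        simp only [if_neg (show ¬ j + n - 1 < t by omega), if_neg (show ¬ j < t + 1 by omega)]
        congr 1
        omega
  have h := key n le_rfl
  rw [Nat.sub_self] at h
  rw [h]
  show f _ = _
  refine hdep _ _ fun i hi => ?_
  simp only [if_pos hi]

lemma invol_inv (hn : 3 ≤ n) (hdep : DepOn n f) (ha : Assoc n f)
    (hsemi : ∀ x : ℕ → G,
      f x = f (fun k => if k = 0 then x (n - 1) else if k = n - 1 then x 0 else x k)) :
    ∀ (s : ℕ) (σ : ℕ → ℕ), (∀ m, σ (σ m) = m) → (∀ m, σ m % (n-1) = m % (n-1)) →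
      (∀ m, n*n ≤ m → σ m = m) →
      ((Finset.range (n*n)).filter (fun m => σ m ≠ m)).card ≤ s →
      ∀ y : ℕ → G, LL n f n (fun m => y (σ m)) = LL n f n y := by
  intro s
  induction s with
  | zero =>
    intro σ hinv hres hsupp hcard y
    have hfix : ∀ m, σ m = m := by
      intro m
      rcases Nat.lt_or_ge m (n*n) with h | h
      · by_contra hne
        have hm : m ∈ (Finset.range (n*n)).filter (fun m => σ m ≠ m) :=
          Finset.mem_filter.mpr ⟨Finset.mem_range.mpr h, hne⟩
        have := Finset.card_pos.mpr ⟨m, hm⟩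
        omega
      · exact hsupp m h
    have e : (fun m => y (σ m)) = y := funext fun m => by rw [hfix m]
    rw [e]
  | succ s ih =>
    intro σ hinv hres hsupp hcard y
    by_cases hfixall : ∀ m < n*n, σ m = m
    · have hfix : ∀ m, σ m = m := fun m =>
        (Nat.lt_or_ge m (n*n)).elim (hfixall m) (hsupp m)
      have e : (fun m => y (σ m)) = y := funext fun m => by rw [hfix m]
      rw [e]
    · push_neg at hfixall
      obtain ⟨a, halt, hane⟩ := hfixall
      set b := σ a with hbdef
      have hba : σ b = a := hinv a
      have hblt : b < n*n := by
        by_contra hb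
        push_neg at hb
        have h2 := hsupp b hb
        exact hane (by omega)
      obtain ⟨p, q, hplt, hσp, hσq, hqlt, hplt2⟩ :
          ∃ p q, p < q ∧ σ p = q ∧ σ q = p ∧ q < n*n ∧ p < n*n := by
        rcases Nat.lt_trichotomy a b with h | h | h
        · exact ⟨a, b, h, hbdef.symm, hba, hblt, halt⟩
        · exact absurd h.symm (by omega)
        · exact ⟨b, a, h, hba, hbdef.symm, halt, hblt⟩
      have hmodpq : q % (n-1) = p % (n-1) := by
        have h1 := hres p; rw [hσp] at h1; exact h1
      have hdvd : (n-1) ∣ (q - p) := (Nat.modEq_iff_dvd' hplt.le).mp hmodpq.symm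
      obtain ⟨c, hc⟩ := hdvd
      have hc0 : c ≠ 0 := by rintro rfl; omega
      have hq_eq : q = p + ((c-1)+1)*(n-1) := by
        have h1 : (c-1)+1 = c := by omega
        rw [h1]
        have h2 : c*(n-1) = (n-1)*c := by ring
        omega
      set σ' : ℕ → ℕ := fun m => σ (if m = p then q else if m = q then p else m) with hσ'def
      have hσ'p : σ' p = p := by simp [hσ'def, hσq]
      have hσ'q : σ' q = q := by simp [hσ'def, hplt.ne', hσp]
      have hσ'other : ∀ m, m ≠ p → m ≠ q → σ' m = σ m := by
        intro m h1 h2; simp [hσ'def, h1, h2]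
      have hσnep : ∀ m, m ≠ p → m ≠ q → σ m ≠ p ∧ σ m ≠ q := by
        intro m h1 h2
        constructor
        · intro he
          have := hinv m; rw [he, hσp] at this; omega
        · intro he
          have := hinv m; rw [he, hσq] at this; omega
      have hinv' : ∀ m, σ' (σ' m) = m := by
        intro m
        by_cases h1 : m = p
        · rw [h1, hσ'p, hσ'p]
        · by_cases h2 : m = q
          · rw [h2, hσ'q, hσ'q]
          · obtain ⟨hne1, hne2⟩ := hσnep m h1 h2
            rw [hσ'other m h1 h2, hσ'other _ hne1 hne2, hinv]
      have hres' : ∀ m, σ' m % (n-1) = m % (n-1) := by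
        intro m
        by_cases h1 : m = p
        · rw [h1, hσ'p]
        · by_cases h2 : m = q
          · rw [h2, hσ'q]
          · rw [hσ'other m h1 h2]; exact hres m
      have hsupp' : ∀ m, n*n ≤ m → σ' m = m := by
        intro m hm
        rw [hσ'other m (by omega) (by omega)]
        exact hsupp m hm
      have hpmem : p ∈ (Finset.range (n*n)).filter (fun m => σ m ≠ m) :=
        Finset.mem_filter.mpr ⟨Finset.mem_range.mpr hplt2, by rw [hσp]; omega⟩
      have hsub : (Finset.range (n*n)).filter (fun m => σ' m ≠ m) ⊆
          ((Finset.range (n*n)).filter (fun m => σ m ≠ m)).erase p := by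
        intro m hm
        rw [Finset.mem_filter] at hm
        obtain ⟨hm1, hm2⟩ := hm
        by_cases h1 : m = p
        · exact absurd (h1 ▸ hσ'p) (h1 ▸ hm2)
        · by_cases h2 : m = q
          · exact absurd (h2 ▸ hσ'q) (h2 ▸ hm2)
          · refine Finset.mem_erase.mpr ⟨h1, Finset.mem_filter.mpr ⟨hm1, ?_⟩⟩
            rw [← hσ'other m h1 h2]; exact hm2
      have hcard' : ((Finset.range (n*n)).filter (fun m => σ' m ≠ m)).card ≤ s := by
        have h1 := Finset.card_le_card hsub
        have h2 := Finset.card_erase_of_mem hpmem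
        have h3 := Finset.card_pos.mpr ⟨p, hpmem⟩
        omega
      have hfun : (fun m => y (σ m)) = swF p q (fun m => y (σ' m)) := by
        funext m
        simp only [swF]
        split_ifs with h1 h2
        · rw [h1, hσ'q, hσp]
        · rw [h2, hσ'p, hσq]
        · rw [hσ'other m h1 h2]
      have hsq : n - 1 + 2 = n + 1 := by omega
      have e1 : (n - 1 + 2) * (n - 1) + 1 = n * n := by
        obtain ⟨e, rfl⟩ : ∃ e, n = e + 3 := ⟨n - 3, by omega⟩
        have h1 : e + 3 - 1 = e + 2 := rfl
        rw [h1]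
        ring
      have hcond : p + ((c-1)+1)*(n-1) ≤ ((n-1)+2)*(n-1) := by
        rw [← hq_eq]; omega
      have hswap := swap_gen hn hdep ha hsemi (c-1) (n-1) p (fun m => y (σ' m)) hcond
      rw [show n - 1 + 1 = n from by omega, ← hq_eq] at hswap
      calc LL n f n (fun m => y (σ m))
          = LL n f n (swF p q (fun m => y (σ' m))) := by rw [hfun]
        _ = LL n f n (fun m => y (σ' m)) := hswap.symm
        _ = LL n f n y := ih σ' hinv' hres' hsupp' hcard' y
end Aux

theorem semiabelian_medial {G : Type*} (n : ℕ) (hn : 3 ≤ n) (f : (ℕ → G) → G)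
    (hG : IsNAryGroup n f)
    (hsemi : ∀ x : ℕ → G,
      f x = f (fun k => if k = 0 then x (n - 1) else if k = n - 1 then x 0 else x k)) :
    ∀ x : ℕ → ℕ → G,
      f (fun i => f (fun j => x i j)) = f (fun i => f (fun j => x j i)) := by
  obtain ⟨hdep, ha, -⟩ := hG
  intro x
  have hn0 : 0 < n := by omega
  set y : ℕ → G := fun m => x (m / n) (m % n) with hy
  set σ : ℕ → ℕ := fun m => if m < n*n then (m % n) * n + m / n else m with hσdef
  have hdiv : ∀ i j : ℕ, j < n → (i*n + j)/n = i := by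
    intro i j hj
    rw [Nat.add_comm, Nat.add_mul_div_right _ _ hn0, Nat.div_eq_of_lt hj, Nat.zero_add]
  have hmod : ∀ i j : ℕ, j < n → (i*n + j) % n = j := by
    intro i j hj
    rw [Nat.add_comm, Nat.add_mul_mod_self_right, Nat.mod_eq_of_lt hj]
  have hlt : ∀ i j : ℕ, i < n → j < n → i*n + j < n*n := by
    intro i j hi hj
    have h1 : (i+1)*n ≤ n*n := Nat.mul_le_mul_right _ (by omega)
    have h2 : (i+1)*n = i*n + n := by ring
    omega
  have hσlt : ∀ m, m < n*n → σ m = (m % n) * n + m / n := by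
    intro m hm; simp [hσdef, hm]
  have hσge : ∀ m, ¬ m < n*n → σ m = m := by
    intro m hm; simp [hσdef, hm]
  have hdmlt : ∀ m, m < n*n → m % n < n ∧ m / n < n := by
    intro m hm
    exact ⟨Nat.mod_lt _ hn0, Nat.div_lt_of_lt_mul (by rwa [Nat.mul_comm] at hm)⟩
  have hσsm : ∀ m, m < n*n → σ m < n*n := by
    intro m hm
    obtain ⟨h1, h2⟩ := hdmlt m hm
    rw [hσlt m hm]
    exact hlt _ _ h1 h2
  have hre : ∀ m, n * (m / n) + m % n = m := fun m => Nat.div_add_mod m n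
  have hinvσ : ∀ m, σ (σ m) = m := by
    intro m
    by_cases hm : m < n*n
    · obtain ⟨h1, h2⟩ := hdmlt m hm
      have h3 := hσsm m hm
      rw [hσlt _ h3, hσlt m hm, hmod _ _ h2, hdiv _ _ h2]
      have h4 := hre m
      have h5 : (m/n)*n = n*(m/n) := by ring
      omega
    · rw [hσge m hm, hσge m hm]
  have hkeymod : ∀ u v : ℕ, (u*n + v) % (n-1) = (u + v) % (n-1) := by
    intro u v
    have h0 : n - 1 + 1 = n := by omega
    have h1 : u * n + v = (n-1) * u + (u + v) := by
      conv_lhs => rw [← h0]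
      ring
    rw [h1, Nat.mul_add_mod]
  have hresσ : ∀ m, σ m % (n-1) = m % (n-1) := by
    intro m
    by_cases hm : m < n*n
    · rw [hσlt m hm, hkeymod]
      have h2 : m % n + m / n = m / n + m % n := by ring
      rw [h2, ← hkeymod]
      congr 1
      have h4 := hre m
      have h5 : (m/n)*n = n*(m/n) := by ring
      omega
    · rw [hσge m hm]
  have hsuppσ : ∀ m, n*n ≤ m → σ m = m := fun m hm => hσge m (by omega)
  have hcardσ : ((Finset.range (n*n)).filter (fun m => σ m ≠ m)).card ≤ n*n := by
    calc ((Finset.range (n*n)).filter (fun m => σ m ≠ m)).card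
        ≤ (Finset.range (n*n)).card := Finset.card_filter_le _ _
      _ = n*n := Finset.card_range _
  have hmain := invol_inv hn hdep ha hsemi (n*n) σ hinvσ hresσ hsuppσ hcardσ y
  have hLHS : f (fun i => f (fun j => x i j)) = LL n f n y := by
    rw [LL_rows hn hdep ha y]
    refine hdep _ _ fun i hi => ?_
    refine hdep _ _ fun j hj => ?_
    show x i j = y (i*n + j)
    rw [hy]
    show x i j = x ((i*n+j)/n) ((i*n+j) % n)
    rw [hdiv i j hj, hmod i j hj]
  have hRHS : f (fun i => f (fun j => x j i)) = LL n f n (fun m => y (σ m)) := by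
    rw [LL_rows hn hdep ha (fun m => y (σ m))]
    refine hdep _ _ fun i hi => ?_
    refine hdep _ _ fun j hj => ?_
    show x j i = y (σ (i*n + j))
    have h1 : σ (i*n+j) = j*n + i := by
      rw [hσlt _ (hlt i j hi hj), hdiv i j hj, hmod i j hj]
    rw [h1, hy]
    show x j i = x ((j*n+i)/n) ((j*n+i) % n)
    rw [hdiv j i hi, hmod j i hi]
  rw [hLHS, hRHS, hmain]
end

section
/- In a semiabelian n-ary group, the skew operation distributes over f: the skew of f(x_1,...,x_n) equals f(x̄_1,...,x̄_n). -/
open NAry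
namespace SAP

variable {G : Type*}

/-- the binary word `(x, a, …, a, y)` -/
def bw (n : ℕ) (a x y : G) : ℕ → G :=
  fun k => if k = 0 then x else if k = n - 1 then y else a

/-- the binary retract operation -/
def bop (n : ℕ) (f : (ℕ → G) → G) (a x y : G) : G := f (bw n a x y)

/-- translation maps -/
def th (n : ℕ) (f : (ℕ → G) → G) (a : G) (i : ℕ) (x : G) : G :=
  f (Function.update (fun _ => a) i x)

def Semi (n : ℕ) (f : (ℕ → G) → G) : Prop :=
  ∀ w : ℕ → G, f w = f (fun k => if k = 0 then w (n - 1) else if k = n - 1 then w 0 else w k)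

lemma comp_eq_of {n : ℕ} {f : (ℕ → G) → G} (hdep : DepOn n f) (W L : ℕ → G) (i : ℕ)
    (h1 : ∀ k, k < i → L k = W k)
    (h2 : f (fun m => W (i + m)) = L i)
    (h3 : ∀ k, i < k → k < n → L k = W (k + n - 1)) :
    Comp n f W i = f L := by
  unfold Comp
  apply hdep
  intro k hk
  rcases lt_trichotomy k i with h | h | h
  · rw [if_pos h, h1 k h]
  · subst h
    rw [if_neg (lt_irrefl _), if_pos rfl, h2]
  · rw [if_neg (by omega), if_neg (by omega), h3 k h hk]

lemma th0_surj {n : ℕ} {f : (ℕ → G) → G} {a : G} (hn : 3 ≤ n) (hsolv : Solvable n f)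
    (y : G) : ∃ z, th n f a 0 z = y := by
  obtain ⟨z, hz, -⟩ := hsolv 0 (by omega) (fun _ => a) y
  exact ⟨z, hz⟩

lemma bop_comm {n : ℕ} {f : (ℕ → G) → G} {a : G} (hn : 3 ≤ n) (hsemi : Semi n f)
    (x y : G) : bop n f a x y = bop n f a y x := by
  have h := hsemi (bw n a x y)
  rw [bop, h]
  congr 1
  funext k
  simp only [bw]
  split_ifs <;> first | rfl | omega

lemma bop_e {n : ℕ} {f : (ℕ → G) → G} {a e : G} (hn : 3 ≤ n)
    (hdep : DepOn n f) (hassoc : Assoc n f) (hsolv : Solvable n f)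
    (he : f (Function.update (fun _ => a) (n - 1) e) = a)
    (y : G) : bop n f a y e = y := by
  have key : ∀ x : G, bop n f a (th n f a 0 x) e = th n f a 0 x := by
    intro x
    set W : ℕ → G := fun k => if k = 0 then x else if k = 2 * n - 2 then e else a with hW
    have c0 : Comp n f W 0 = f (bw n a (th n f a 0 x) e) := by
      apply comp_eq_of hdep
      · intro k hk; omega
      · have : f (fun m => W (0 + m)) = th n f a 0 x := by
          apply hdep
          intro k hk
          simp only [hW, Function.update_apply, zero_add]
          split_ifs <;> first | rfl | omega
        rw [this]; simp [bw]
      · intro k hk1 hk2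
        simp only [hW, bw]
        split_ifs <;> first | rfl | omega
    have c1 : Comp n f W (n - 1) = f (Function.update (fun _ => a) 0 x) := by
      apply comp_eq_of hdep
      · intro k hk
        simp only [hW, Function.update_apply]
        split_ifs <;> first | rfl | omega
      · have : f (fun m => W (n - 1 + m)) = a := by
          rw [← he]
          apply hdep
          intro k hk
          simp only [hW, Function.update_apply]
          split_ifs <;> first | rfl | omega
        rw [this]
        simp only [Function.update_apply]
        rw [if_neg (by omega)]
      · intro k hk1 hk2; omega
    have h := hassoc W 0 (n - 1) (by omega) (by omega)
    rw [c0, c1] at h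
    exact h
  obtain ⟨z, hz⟩ := th0_surj (a := a) hn hsolv y
  rw [← hz]
  exact key z

end SAP
namespace SAP

variable {G : Type*}

lemma bop_assoc {n : ℕ} {f : (ℕ → G) → G} {a : G} (hn : 3 ≤ n)
    (hdep : DepOn n f) (hassoc : Assoc n f)
    (x y z : G) : bop n f a (bop n f a x y) z = bop n f a x (bop n f a y z) := by
  set W : ℕ → G := fun k =>
    if k = 0 then x else if k = n - 1 then y else if k = 2 * n - 2 then z else a with hW
  have c0 : Comp n f W 0 = f (bw n a (bop n f a x y) z) := by
    apply comp_eq_of hdep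
    · intro k hk; omega
    · have : f (fun m => W (0 + m)) = bop n f a x y := by
        apply hdep
        intro k hk
        simp only [hW, bw, zero_add]
        split_ifs <;> first | rfl | omega
      rw [this]; simp [bw]
    · intro k hk1 hk2
      simp only [hW, bw]
      split_ifs <;> first | rfl | omega
  have c1 : Comp n f W (n - 1) = f (bw n a x (bop n f a y z)) := by
    apply comp_eq_of hdep
    · intro k hk
      simp only [hW, bw]
      split_ifs <;> first | rfl | omega
    · have : f (fun m => W (n - 1 + m)) = bop n f a y z := by
        apply hdep
        intro k hk
        simp only [hW, bw]
        split_ifs <;> first | rfl | omega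
      rw [this]
      simp only [bw]
      split_ifs <;> first | rfl | omega
    · intro k hk1 hk2; omega
  have h := hassoc W 0 (n - 1) (by omega) (by omega)
  rw [c0, c1] at h
  exact h

lemma inv_ex {n : ℕ} {f : (ℕ → G) → G} {a e : G} (hn : 3 ≤ n) (hsolv : Solvable n f)
    (x : G) : ∃ y, bop n f a x y = e := by
  obtain ⟨z, hz, -⟩ := hsolv (n - 1) (by omega) (bw n a x a) e
  refine ⟨z, ?_⟩
  rw [bop, show bw n a x z = Function.update (bw n a x a) (n - 1) z from ?_]
  · exact hz
  · funext k
    simp only [bw, Function.update_apply]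
    split_ifs <;> first | rfl | omega

lemma extract0 {n : ℕ} {f : (ℕ → G) → G} {a e : G} (hn : 3 ≤ n)
    (hdep : DepOn n f) (hassoc : Assoc n f) (hsolv : Solvable n f)
    (he : f (Function.update (fun _ => a) (n - 1) e) = a)
    (w : ℕ → G) : f w = bop n f a (w 0) (f (Function.update w 0 e)) := by
  set W : ℕ → G := fun k =>
    if k = 0 then w 0 else if k < n - 1 then a else if k = n - 1 then e
    else w (k - (n - 1)) with hW
  have c0 : Comp n f W 0 = f w := by
    have c0' : Comp n f W 0 = f (fun k => if k = 0 then bop n f a (w 0) e else w k) := by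
      apply comp_eq_of hdep
      · intro k hk; omega
      · have : f (fun m => W (0 + m)) = bop n f a (w 0) e := by
          apply hdep
          intro k hk
          simp only [hW, bw, zero_add]
          split_ifs <;> first | rfl | omega
        rw [this]; simp
      · intro k hk1 hk2
        simp only [hW]
        rw [if_neg (by omega), if_neg (by omega), if_neg (by omega), if_neg (by omega)]
        congr 1
        omega
    rw [c0']
    congr 1
    funext k
    by_cases h : k = 0
    · subst h
      simp only [if_pos rfl]
      exact bop_e hn hdep hassoc hsolv he (w 0)
    · rw [if_neg h]
  have c1 : Comp n f W (n - 1) = bop n f a (w 0) (f (Function.update w 0 e)) := by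
    apply comp_eq_of hdep
    · intro k hk
      simp only [hW, bw]
      split_ifs <;> first | rfl | omega
    · have : f (fun m => W (n - 1 + m)) = f (Function.update w 0 e) := by
        apply hdep
        intro k hk
        simp only [hW, Function.update_apply]
        rcases Nat.eq_zero_or_pos k with h | h
        · subst h
          rw [if_neg (by omega), if_neg (by omega), if_pos (by omega), if_pos rfl]
        · rw [if_neg (by omega), if_neg (by omega), if_neg (by omega), if_neg (by omega)]
          congr 1
          omega
      rw [this]
      simp only [bw]
      split_ifs <;> first | rfl | omega
    · intro k hk1 hk2; omega
  have h := hassoc W 0 (n - 1) (by omega) (by omega)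
  rw [c0, c1] at h
  exact h

lemma extractLast {n : ℕ} {f : (ℕ → G) → G} {a e : G} (hn : 3 ≤ n)
    (hdep : DepOn n f) (hassoc : Assoc n f) (hsolv : Solvable n f) (hsemi : Semi n f)
    (he : f (Function.update (fun _ => a) (n - 1) e) = a)
    (w : ℕ → G) : f w = bop n f a (w (n - 1)) (f (Function.update w (n - 1) e)) := by
  set w₁ : ℕ → G := fun k => if k = 0 then w (n - 1) else if k = n - 1 then w 0 else w k with hw₁
  have h1 : f w = f w₁ := hsemi w
  have h2 := extract0 (e := e) hn hdep hassoc hsolv he w₁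
  have h3 : f (Function.update w₁ 0 e) = f (Function.update w (n - 1) e) := by
    have := hsemi (Function.update w (n - 1) e)
    rw [this]
    congr 1
    funext k
    simp only [hw₁, Function.update_apply]
    split_ifs <;> first | rfl | omega
  rw [h1, h2, h3]
  simp only [hw₁, if_pos rfl]

lemma th_zero {n : ℕ} {f : (ℕ → G) → G} {a : G} (hn : 3 ≤ n) (hdep : DepOn n f)
    (x : G) : th n f a 0 x = bop n f a x a := by
  apply hdep
  intro k hk
  simp only [Function.update_apply, bw]
  split_ifs <;> first | rfl | omega

lemma th_last {n : ℕ} {f : (ℕ → G) → G} {a : G} (hn : 3 ≤ n) (hdep : DepOn n f)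
    (hsemi : Semi n f) (x : G) : th n f a (n - 1) x = bop n f a x a := by
  have h := hsemi (Function.update (fun _ => a) (n - 1) x)
  rw [th, h]
  apply hdep
  intro k hk
  simp only [Function.update_apply, bw]
  split_ifs <;> first | rfl | omega

lemma th_comm {n : ℕ} {f : (ℕ → G) → G} {a : G} (hn : 3 ≤ n)
    (hdep : DepOn n f) (hassoc : Assoc n f) {i j : ℕ} (hi : i < n) (hj : j < n)
    (x : G) : th n f a i (th n f a j x) = th n f a j (th n f a i x) := by
  set W : ℕ → G := fun k => if k = i + j then x else a with hW
  have key : ∀ p q : ℕ, p < n → q < n → p + q = i + j →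
      Comp n f W p = th n f a p (th n f a q x) := by
    intro p q hp hq hpq
    apply comp_eq_of hdep
    · intro k hk
      simp only [hW, Function.update_apply]
      split_ifs <;> first | rfl | omega
    · have : f (fun m => W (p + m)) = th n f a q x := by
        apply hdep
        intro k hk
        simp only [hW, Function.update_apply]
        split_ifs <;> first | rfl | omega
      rw [this]
      simp only [Function.update_apply]
      split_ifs <;> first | rfl | omega
    · intro k hk1 hk2
      simp only [hW, Function.update_apply]
      split_ifs <;> first | rfl | omega
  have h := hassoc W i j hi hj
  rw [key i j hi hj rfl, key j i hj hi (by omega)] at h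
  exact h

end SAP
namespace SAP

variable {G : Type*}

lemma lemI2 {n : ℕ} {f : (ℕ → G) → G} {a : G} (hn : 3 ≤ n)
    (hdep : DepOn n f) (hassoc : Assoc n f) {i : ℕ} (hi1 : 1 ≤ i) (hi2 : i ≤ n - 2)
    (w : ℕ → G) (x y : G) :
    f (fun k => if k < i then a else if k = i then bop n f a x y else w k)
      = f (fun k => if k = 0 then th n f a i x else if k < i then a else
          if k = i then y else w k) := by
  set W : ℕ → G := fun k => if k = i then x else if k = i + n - 1 then y else
    if k < i + n - 1 then a else w (k - (n - 1)) with hW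
  have ci : Comp n f W i
      = f (fun k => if k < i then a else if k = i then bop n f a x y else w k) := by
    apply comp_eq_of hdep
    · intro k hk
      simp only [hW]
      split_ifs <;> first | rfl | omega
    · have : f (fun m => W (i + m)) = bop n f a x y := by
        apply hdep
        intro k hk
        simp only [hW, bw]
        split_ifs <;> first | rfl | omega | (congr 1; omega)
      rw [this]
      split_ifs <;> first | rfl | omega
    · intro k hk1 hk2
      simp only [hW]
      split_ifs <;> first | rfl | omega | (congr 1; omega)
  have c0 : Comp n f W 0
      = f (fun k => if k = 0 then th n f a i x else if k < i then a else
          if k = i then y else w k) := by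
    apply comp_eq_of hdep
    · intro k hk; omega
    · have : f (fun m => W (0 + m)) = th n f a i x := by
        apply hdep
        intro k hk
        simp only [hW, Function.update_apply, zero_add]
        split_ifs <;> first | rfl | omega | (congr 1; omega)
      rw [this]
      split_ifs <;> first | rfl | omega
    · intro k hk1 hk2
      simp only [hW]
      split_ifs <;> first | rfl | omega | (congr 1; omega)
  have h := hassoc W i 0 (by omega) (by omega)
  rw [ci, c0] at h
  exact h

lemma lemI1a {n : ℕ} {f : (ℕ → G) → G} {a e : G} (hn : 3 ≤ n)
    (hdep : DepOn n f) (hassoc : Assoc n f) (hsolv : Solvable n f) (hsemi : Semi n f)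
    (he : f (Function.update (fun _ => a) (n - 1) e) = a)
    {i : ℕ} (hi1 : 1 ≤ i) (hi2 : i ≤ n - 2) (w : ℕ → G) :
    f w = f (fun k => if k < i then w k else if k = i then e else
      if k = n - 1 then f (fun m => if m < i then a else w m) else a) := by
  set A : ℕ → G := fun k => if k < i then w k else if k = i then e else
    if k = i + n - 1 then w i else if k < i + n - 1 then a else w (k - (n - 1)) with hA
  have ci : Comp n f A i = f w := by
    have ci' : Comp n f A i
        = f (fun k => if k = i then bop n f a e (w i) else w k) := by
      apply comp_eq_of hdep
      · intro k hk
        simp only [hA]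
        split_ifs <;> first | rfl | omega
      · have : f (fun m => A (i + m)) = bop n f a e (w i) := by
          apply hdep
          intro k hk
          simp only [hA, bw]
          split_ifs <;> first | rfl | omega | (congr 1; omega)
        rw [this]
        split_ifs <;> first | rfl | omega
      · intro k hk1 hk2
        simp only [hA]
        split_ifs <;> first | rfl | omega | (congr 1; omega)
    rw [ci']
    congr 1
    funext k
    by_cases h : k = i
    · subst h
      rw [if_pos rfl, bop_comm hn hsemi, bop_e hn hdep hassoc hsolv he]
    · rw [if_neg h]
  have cl : Comp n f A (n - 1)
      = f (fun k => if k < i then w k else if k = i then e else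
          if k = n - 1 then f (fun m => if m < i then a else w m) else a) := by
    apply comp_eq_of hdep
    · intro k hk
      simp only [hA]
      split_ifs <;> first | rfl | omega
    · have : f (fun m => A (n - 1 + m)) = f (fun m => if m < i then a else w m) := by
        apply hdep
        intro k hk
        simp only [hA]
        split_ifs <;> first | rfl | omega | (congr 1; omega)
      rw [this]
      split_ifs <;> first | rfl | omega
    · intro k hk1 hk2; omega
  have h := hassoc A i (n - 1) (by omega) (by omega)
  rw [ci, cl] at h
  exact h

lemma lemA7 {n : ℕ} {f : (ℕ → G) → G} {a e : G} (hn : 3 ≤ n)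
    (hdep : DepOn n f) (hassoc : Assoc n f) (hsolv : Solvable n f) (hsemi : Semi n f)
    (he : f (Function.update (fun _ => a) (n - 1) e) = a)
    {i : ℕ} (hi1 : 1 ≤ i) (hi2 : i ≤ n - 2) (w : ℕ → G) :
    f w = bop n f a (f (fun k => if k < i then a else w k))
      (f (fun k => if k < i then w k else if k = i then e else
        if k = n - 1 then e else a)) := by
  rw [lemI1a hn hdep hassoc hsolv hsemi he hi1 hi2 w]
  set X : ℕ → G := fun k => if k < i then w k else if k = i then e else
    if k = n - 1 then f (fun m => if m < i then a else w m) else a with hX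
  rw [extractLast hn hdep hassoc hsolv hsemi he X]
  have h1 : X (n - 1) = f (fun m => if m < i then a else w m) := by
    simp only [hX]
    split_ifs <;> first | rfl | omega
  have h2 : Function.update X (n - 1) e
      = fun k => if k < i then w k else if k = i then e else if k = n - 1 then e else a := by
    funext k
    simp only [hX, Function.update_apply]
    split_ifs <;> first | rfl | omega
  rw [h1, h2]

lemma lemA8 {n : ℕ} {f : (ℕ → G) → G} {a e : G} (hn : 3 ≤ n)
    (hdep : DepOn n f) (hassoc : Assoc n f) (hsolv : Solvable n f)
    (he : f (Function.update (fun _ => a) (n - 1) e) = a)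
    {i : ℕ} (hi1 : 1 ≤ i) (hi2 : i ≤ n - 2) (w : ℕ → G) :
    f (fun k => if k < i then a else w k)
      = bop n f a (th n f a i (w i))
        (f (fun k => if k = 0 then e else if k < i then a else
          if k = i then e else w k)) := by
  have h := lemI2 (a := a) hn hdep hassoc hi1 hi2 w (w i) e
  have h1 : (fun k => if k < i then a else if k = i then bop n f a (w i) e else w k)
      = fun k => if k < i then a else w k := by
    funext k
    by_cases hk : k = i
    · subst hk
      rw [if_neg (by omega), if_pos rfl, bop_e hn hdep hassoc hsolv he]
      rw [if_neg (by omega)]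
    · by_cases hk2 : k < i
      · rw [if_pos hk2, if_pos hk2]
      · rw [if_neg hk2, if_neg hk, if_neg hk2]
  rw [h1] at h
  rw [h]
  set Y : ℕ → G := fun k => if k = 0 then th n f a i (w i) else if k < i then a else
    if k = i then e else w k with hY
  rw [extract0 hn hdep hassoc hsolv he Y]
  have h2 : Y 0 = th n f a i (w i) := by
    simp only [hY]
    split_ifs <;> first | rfl | omega
  have h3 : Function.update Y 0 e
      = fun k => if k = 0 then e else if k < i then a else if k = i then e else w k := by
    funext k
    simp only [hY, Function.update_apply]
    split_ifs <;> first | rfl | omega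
  rw [h2, h3]

lemma lemA10 {n : ℕ} {f : (ℕ → G) → G} {a e : G} (hn : 3 ≤ n)
    (hdep : DepOn n f) (hassoc : Assoc n f) (hsolv : Solvable n f)
    (he : f (Function.update (fun _ => a) (n - 1) e) = a)
    {i : ℕ} (hi1 : 1 ≤ i) (hi2 : i ≤ n - 2) (x y : G) :
    th n f a i (bop n f a x y)
      = bop n f a (th n f a i x)
        (f (fun k => if k = 0 then e else if k = i then y else a)) := by
  have h := lemI2 (a := a) hn hdep hassoc hi1 hi2 (fun _ => a) x y
  have h1 : (fun k => if k < i then a else if k = i then bop n f a x y else (fun _ => a) k)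
      = Function.update (fun _ : ℕ => a) i (bop n f a x y) := by
    funext k
    simp only [Function.update_apply]
    split_ifs <;> first | rfl | omega
  rw [h1] at h
  rw [th, h]
  set Y : ℕ → G := fun k => if k = 0 then th n f a i x else if k < i then a else
    if k = i then y else (fun _ : ℕ => a) k with hY
  rw [extract0 hn hdep hassoc hsolv he Y]
  have h2 : Y 0 = th n f a i x := by
    simp only [hY]
    split_ifs <;> first | rfl | omega
  have h3 : Function.update Y 0 e
      = fun k => if k = 0 then e else if k = i then y else a := by
    funext k
    simp only [hY, Function.update_apply]
    split_ifs <;> first | rfl | omega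
  rw [h2, h3]

end SAP
namespace SAP

theorem master {G : Type*} (n : ℕ) (hn : 3 ≤ n) (f : (ℕ → G) → G)
    (hdep : DepOn n f) (hassoc : Assoc n f) (hsolv : Solvable n f)
    (hsemi : Semi n f) (sk : G → G) (hsk : ∀ z, IsSkew n f z (sk z)) (a : G)
    (x : ℕ → G) : IsSkew n f (f x) (f (fun k => sk (x k))) := by
  have he : f (Function.update (fun _ => a) (n - 1) (sk a)) = a := hsk a
  set e : G := sk a with he_def
  have hcomm := bop_comm (a := a) (f := f) hn hsemi
  have hbassoc := bop_assoc (a := a) hn hdep hassoc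
  have hre : ∀ y, bop n f a y e = y := bop_e hn hdep hassoc hsolv he
  have hinv : ∀ z, ∃ y, bop n f a z y = e := inv_ex (a := a) (e := e) hn hsolv
  letI : Add G := ⟨bop n f a⟩
  letI : Zero G := ⟨e⟩
  letI : Neg G := ⟨fun z => Classical.choose (hinv z)⟩
  letI : AddGroup G :=
    AddGroup.ofLeftAxioms hbassoc
      (fun z => by show bop n f a e z = z; rw [hcomm]; exact hre z)
      (fun z => by
        show bop n f a (Classical.choose (hinv z)) z = e
        rw [hcomm]
        exact Classical.choose_spec (hinv z))
  letI : AddCommGroup G := { (inferInstance : AddGroup G) with add_comm := hcomm }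
  have hb : ∀ p q : G, bop n f a p q = p + q := fun _ _ => rfl
  obtain ⟨ψ, hψ⟩ : ∃ ψ : ℕ → G → G, ∀ i z, ψ i z = th n f a i z - th n f a i e :=
    ⟨_, fun _ _ => rfl⟩
  have hψ0 : ∀ z, ψ 0 z = z := by
    intro z
    rw [hψ, th_zero hn hdep, th_zero hn hdep, hb, hb]
    have h0 : e = (0 : G) := rfl
    rw [h0]
    abel
  have hψlast : ∀ z, ψ (n - 1) z = z := by
    intro z
    rw [hψ, th_last hn hdep hsemi, th_last hn hdep hsemi, hb, hb]
    have h0 : e = (0 : G) := rfl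
    rw [h0]
    abel
  have hψzero : ∀ i, ψ i (0 : G) = 0 := by
    intro i
    rw [hψ]
    exact sub_self _
  have hψadd : ∀ i, i < n → ∀ y z : G, ψ i (y + z) = ψ i y + ψ i z := by
    intro i hi y z
    rcases eq_or_ne i 0 with rfl | h0
    · rw [hψ0, hψ0, hψ0]
    rcases eq_or_ne i (n - 1) with rfl | hL
    · rw [hψlast, hψlast, hψlast]
    have hi1 : 1 ≤ i := by omega
    have hi2 : i ≤ n - 2 := by omega
    have key := lemA10 (e := e) hn hdep hassoc hsolv he hi1 hi2
    have hbez : bop n f a e z = z := by rw [hcomm]; exact hre z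
    have hρ : f (fun k => if k = 0 then e else if k = i then z else a) = ψ i z := by
      have h := key e z
      rw [hbez] at h
      rw [hψ, h, hb]
      abel
    have h := key y z
    rw [hρ] at h
    rw [hb, hb] at h
    -- h : th i (y + z) = th i y + ψ i z
    have h2 : ψ i (y + z) = th n f a i (y + z) - th n f a i e := hψ _ _
    rw [h2, h, hψ i y, hψ i z]
    abel
  have hψsub : ∀ i, i < n → ∀ y z : G, ψ i (y - z) = ψ i y - ψ i z := by
    intro i hi y z
    have hy : y - z + z = y := by abel
    have h := hψadd i hi (y - z) z
    rw [hy] at h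
    rw [eq_sub_iff_add_eq, ← h]
  have hψsum : ∀ i, i < n → ∀ (s : Finset ℕ) (g : ℕ → G),
      ψ i (∑ j ∈ s, g j) = ∑ j ∈ s, ψ i (g j) := by
    intro i hi s g
    classical
    induction s using Finset.cons_induction with
    | empty => simpa using hψzero i
    | cons j s hj ih =>
        rw [Finset.sum_cons, Finset.sum_cons, hψadd i hi, ih]
  have hψcomm : ∀ i, i < n → ∀ j, j < n → ∀ z : G, ψ i (ψ j z) = ψ j (ψ i z) := by
    have key : ∀ p, p < n → ∀ q, q < n → ∀ z : G,
        ψ p (ψ q z) = th n f a p (th n f a q z) - th n f a p (th n f a q e) := by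
      intro p hp q hq z
      rw [hψ q z, hψsub p hp, hψ p, hψ p]
      abel
    intro i hi j hj z
    rw [key i hi j hj, key j hj i hi, th_comm hn hdep hassoc hi hj,
      th_comm hn hdep hassoc hi hj]
  have hextract : ∀ i, i < n → ∀ w : ℕ → G,
      f w = ψ i (w i) + f (Function.update w i e) := by
    intro i hi w
    rcases eq_or_ne i 0 with rfl | h0
    · rw [hψ0, ← hb]
      exact extract0 hn hdep hassoc hsolv he w
    rcases eq_or_ne i (n - 1) with rfl | hL
    · rw [hψlast, ← hb]
      exact extractLast hn hdep hassoc hsolv hsemi he w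
    have hi1 : 1 ≤ i := by omega
    have hi2 : i ≤ n - 2 := by omega
    have e1 := lemA7 (e := e) hn hdep hassoc hsolv hsemi he hi1 hi2 w
    have e2 := lemA8 (e := e) hn hdep hassoc hsolv he hi1 hi2 w
    have e3 := lemA7 (e := e) hn hdep hassoc hsolv hsemi he hi1 hi2 (Function.update w i e)
    have e4 := lemA8 (e := e) hn hdep hassoc hsolv he hi1 hi2 (Function.update w i e)
    have r1 : (fun k => if k < i then a else Function.update w i e k)
        = Function.update (fun k => if k < i then a else w k) i e := by
      funext k
      simp only [Function.update_apply]
      split_ifs <;> first | rfl | omega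
    have r3 : (fun k => if k < i then Function.update w i e k else if k = i then e else
          if k = n - 1 then e else a)
        = (fun k => if k < i then w k else if k = i then e else if k = n - 1 then e else a) := by
      funext k
      simp only [Function.update_apply]
      split_ifs <;> first | rfl | omega
    have r4 : (fun k => if k = 0 then e else if k < i then a else if k = i then e else
          Function.update w i e k)
        = (fun k => if k = 0 then e else if k < i then a else if k = i then e else w k) := by
      funext k
      simp only [Function.update_apply]
      split_ifs <;> first | rfl | omega
    rw [r1, r3] at e3
    rw [r1, Function.update_self, r4] at e4
    simp only [hb] at e1 e2 e3 e4
    rw [hψ, e1, e2, e3, e4]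
    abel
  have hdecomp : ∀ w : ℕ → G,
      f w = (∑ i ∈ Finset.range n, ψ i (w i)) + f (fun _ => e) := by
    intro w
    have aux : ∀ k, k ≤ n →
        f w = (∑ i ∈ Finset.range k, ψ i (w i)) + f (fun j => if j < k then e else w j) := by
      intro k
      induction k with
      | zero =>
          intro _
          have : (fun j => if j < 0 then e else w j) = w := by
            funext j; simp
          rw [this]
          simp
      | succ k ih =>
          intro hk1
          have ih' := ih (by omega)
          have step := hextract k (by omega) (fun j => if j < k then e else w j)
          simp only [lt_self_iff_false, if_false] at step
          have hupd : Function.update (fun j => if j < k then e else w j) k e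
              = fun j => if j < k + 1 then e else w j := by
            funext j
            simp only [Function.update_apply]
            split_ifs <;> first | rfl | omega
          rw [hupd] at step
          rw [ih', step, Finset.sum_range_succ]
          abel
    have h := aux n le_rfl
    have h2 : f (fun j => if j < n then e else w j) = f (fun _ => e) :=
      hdep _ _ (fun j hj => by rw [if_pos hj])
    rw [h, h2]
  have h1 : n - 1 + 1 = n := by omega
  have hsplit : ∀ c s : G,
      ∑ i ∈ Finset.range n, ψ i (Function.update (fun _ => c) (n - 1) s i)
        = (∑ i ∈ Finset.range (n - 1), ψ i c) + s := by
    intro c s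
    calc ∑ i ∈ Finset.range n, ψ i (Function.update (fun _ => c) (n - 1) s i)
        = ∑ i ∈ Finset.range (n - 1 + 1), ψ i (Function.update (fun _ => c) (n - 1) s i) := by
          rw [h1]
      _ = (∑ i ∈ Finset.range (n - 1), ψ i (Function.update (fun _ => c) (n - 1) s i))
            + ψ (n - 1) (Function.update (fun _ => c) (n - 1) s (n - 1)) :=
          Finset.sum_range_succ _ _
      _ = (∑ i ∈ Finset.range (n - 1), ψ i c) + s := by
          congr 1
          · apply Finset.sum_congr rfl
            intro i hi
            rw [Function.update_apply, if_neg (by simp only [Finset.mem_range] at hi; omega)]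
          · rw [Function.update_self]
            exact hψlast s
  have hskf : ∀ z : G, sk z = z - f (fun _ => e) - ∑ i ∈ Finset.range (n - 1), ψ i z := by
    intro z
    have hz : f (Function.update (fun _ => z) (n - 1) (sk z)) = z := hsk z
    rw [hdecomp, hsplit] at hz
    rw [eq_sub_iff_add_eq, eq_sub_iff_add_eq,
      add_comm (sk z) (∑ i ∈ Finset.range (n - 1), ψ i z)]
    exact hz
  -- final computation
  show f (Function.update (fun _ => f x) (n - 1) (f (fun k => sk (x k)))) = f x
  rw [hdecomp, hsplit]
  have hSd : f (fun k => sk (x k))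
      = (∑ j ∈ Finset.range n, ψ j (sk (x j))) + f (fun _ => e) := by
    have := hdecomp (fun k => sk (x k))
    simpa using this
  have hFd : f x = (∑ j ∈ Finset.range n, ψ j (x j)) + f (fun _ => e) := hdecomp x
  have hsum1 : ∑ j ∈ Finset.range n, ψ j (sk (x j))
      = (∑ j ∈ Finset.range n, ψ j (x j)) - (∑ j ∈ Finset.range n, ψ j (f (fun _ => e)))
        - ∑ j ∈ Finset.range n, ∑ i ∈ Finset.range (n - 1), ψ j (ψ i (x j)) := by
    rw [← Finset.sum_sub_distrib, ← Finset.sum_sub_distrib]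
    apply Finset.sum_congr rfl
    intro j hj
    have hjn : j < n := by simpa using hj
    rw [hskf (x j), hψsub j hjn, hψsub j hjn, hψsum j hjn]
  have hswap : ∑ j ∈ Finset.range n, ∑ i ∈ Finset.range (n - 1), ψ j (ψ i (x j))
      = ∑ i ∈ Finset.range (n - 1), ∑ j ∈ Finset.range n, ψ i (ψ j (x j)) := by
    rw [Finset.sum_comm]
    apply Finset.sum_congr rfl
    intro i hi
    apply Finset.sum_congr rfl
    intro j hj
    exact hψcomm j (by simpa using hj) i (by simp only [Finset.mem_range] at hi; omega) (x j)
  have hsumF : ∑ i ∈ Finset.range (n - 1), ψ i (f x)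
      = (∑ i ∈ Finset.range (n - 1), ∑ j ∈ Finset.range n, ψ i (ψ j (x j)))
        + ∑ i ∈ Finset.range (n - 1), ψ i (f (fun _ => e)) := by
    rw [← Finset.sum_add_distrib]
    apply Finset.sum_congr rfl
    intro i hi
    have hin : i < n := by simp only [Finset.mem_range] at hi; omega
    rw [hFd, hψadd i hin, hψsum i hin]
  have hlastd : ∑ j ∈ Finset.range n, ψ j (f (fun _ => e))
      = (∑ j ∈ Finset.range (n - 1), ψ j (f (fun _ => e))) + f (fun _ => e) := by
    calc ∑ j ∈ Finset.range n, ψ j (f (fun _ => e))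
        = ∑ j ∈ Finset.range (n - 1 + 1), ψ j (f (fun _ => e)) := by rw [h1]
      _ = (∑ j ∈ Finset.range (n - 1), ψ j (f (fun _ => e)))
            + ψ (n - 1) (f (fun _ => e)) := Finset.sum_range_succ _ _
      _ = _ := by rw [hψlast]
  rw [hsumF, hSd, hsum1, hswap, hlastd, hFd]
  abel

end SAP

theorem semiabelian_skew_distrib {G : Type*} (n : ℕ) (hn : 3 ≤ n) (f : (ℕ → G) → G)
    (hG : IsNAryGroup n f)
    (hsemi : ∀ x : ℕ → G,
      f x = f (fun k => if k = 0 then x (n - 1) else if k = n - 1 then x 0 else x k))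
    (sk : G → G) (hsk : ∀ x, IsSkew n f x (sk x)) :
    ∀ x : ℕ → G, IsSkew n f (f x) (f (fun k => sk (x k))) := by
  obtain ⟨hdep, hassoc, hsolv⟩ := hG
  intro x
  exact SAP.master n hn f hdep hassoc hsolv hsemi sk hsk (x 0) x
end

section
/- For any n-ary group (G,f), the formula x.a = f(x, a, x,...,x, x̄) (with n−3 copies of x between a and x̄) defines an action of (G,f) on itself: f(x_1,...,x_n).a = x_1.(x_2.(⋯(x_n.a)⋯)), every a is fixed by some x, and each map a ↦ x.a is a bijection. -/
namespace NAry

variable {G : Type*} {A : Type*}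

section lemmas
variable {n : ℕ} {f : (ℕ → G) → G}

theorem cancelAt (hdep : DepOn n f) (hsol : Solvable n f) {i : ℕ} (hi : i < n)
    {g g' : ℕ → G} (hagree : ∀ k < n, k ≠ i → g k = g' k) (heq : f g = f g') : g i = g' i := by
  obtain ⟨z, _, hu⟩ := hsol i hi g (f g')
  have h1 : f (Function.update g i (g i)) = f g' := by rw [Function.update_eq_self]; exact heq
  have h2 : f (Function.update g i (g' i)) = f g' := by
    apply hdep; intro k hk
    rcases eq_or_ne k i with rfl | hne
    · simp
    · rw [Function.update_of_ne hne]; exact hagree k hk hne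
  rw [hu _ h1, hu _ h2]

theorem assoc_app (hdep : DepOn n f) (hassoc : Assoc n f) (x : ℕ → G) {i j : ℕ}
    (hi : i < n) (hj : j < n) {gi gj : ℕ → G} {vi vj : G}
    (hvi : f (fun m => x (i + m)) = vi)
    (hvj : f (fun m => x (j + m)) = vj)
    (hgi : ∀ k < n, gi k = if k < i then x k else if k = i then vi else x (k + n - 1))
    (hgj : ∀ k < n, gj k = if k < j then x k else if k = j then vj else x (k + n - 1)) :
    f gi = f gj := by
  have e1 : f gi = Comp n f x i := hdep _ _ (fun k hk => by rw [hgi k hk, ← hvi])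
  have e2 : f gj = Comp n f x j := hdep _ _ (fun k hk => by rw [hgj k hk, ← hvj])
  rw [e1, e2, hassoc x i j hi hj]


theorem amid (hn : 3 ≤ n) (hdep : DepOn n f) (hassoc : Assoc n f) (hsol : Solvable n f)
    {x sx : G} (hs : f (fun k => if k = n-1 then sx else x) = x) :
    f (fun k => if k = n-2 then sx else x) = x := by
  set A := f (fun k => if k = n-2 then sx else x) with hA
  set W : ℕ → G := fun k => if k = n-1 then sx else if k = 2*n-2 then sx else x with hW
  have hv0 : f (fun m => W (0+m)) = x := by
    refine (hdep _ (fun k => if k = n-1 then sx else x) ?_).trans hs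
    intro k hk; simp only [hW]; split_ifs <;> first | rfl | omega | (exfalso; omega)
  have hv1 : f (fun m => W (1+m)) = A := by
    refine (hdep _ (fun k => if k = n-2 then sx else x) ?_)
    intro k hk; simp only [hW]; split_ifs <;> first | rfl | omega | (exfalso; omega)
  have key : f (fun k => if k = n-1 then sx else x)
      = f (fun k => if k = 1 then A else if k = n-1 then sx else x) := by
    refine assoc_app hdep hassoc W (by omega : 0 < n) (by omega : 1 < n) hv0 hv1 ?_ ?_
    · intro k hk; simp only [hW]; split_ifs <;> first | rfl | omega | (exfalso; omega)
    · intro k hk; simp only [hW]; split_ifs <;> first | rfl | omega | (exfalso; omega)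
  have hc := cancelAt hdep hsol (by omega : 1 < n)
    (g := fun k => if k = 1 then A else if k = n-1 then sx else x)
    (g' := fun k => if k = n-1 then sx else x)
    (fun k hk hk1 => by split_ifs <;> first | rfl | omega | (exfalso; omega))
    key.symm
  simpa [show ¬(1 = n-1) by omega] using hc

theorem d3 (hn : 3 ≤ n) (hdep : DepOn n f) (hassoc : Assoc n f) (hsol : Solvable n f)
    {x sx : G} (hs : f (fun k => if k = n-1 then sx else x) = x) (b : G) :
    f (fun k => if k = 0 then b else if k = n-2 then sx else x) = b := by
  set T : G → G := fun c => f (fun k => if k = 0 then c else if k = n-2 then sx else x) with hT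
  show T b = b
  set W : ℕ → G := fun k => if k = 0 then b else if k = n-2 then sx else
    if k = 2*n-3 then sx else x with hW
  have hv0 : f (fun m => W (0+m)) = T b := by
    refine (hdep _ (fun k => if k = 0 then b else if k = n-2 then sx else x) ?_)
    intro k hk; simp only [hW]; split_ifs <;> first | rfl | omega
  have hvj : f (fun m => W (n-1+m)) = x := by
    refine (hdep _ (fun k => if k = n-2 then sx else x) ?_).trans
      (amid hn hdep hassoc hsol hs)
    intro k hk; simp only [hW]; split_ifs <;> first | rfl | omega
  have key : T (T b) = T b := by
    refine assoc_app hdep hassoc W (by omega : 0 < n) (by omega : n-1 < n) hv0 hvj ?_ ?_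
    · intro k hk; simp only [hW]; split_ifs <;> first | rfl | omega
    · intro k hk; simp only [hW]; split_ifs <;> first | rfl | omega
  have hc := cancelAt hdep hsol (by omega : 0 < n)
    (g := fun k => if k = 0 then T b else if k = n-2 then sx else x)
    (g' := fun k => if k = 0 then b else if k = n-2 then sx else x)
    (fun k hk hk0 => by split_ifs <;> first | rfl | omega)
    key
  simpa using hc

theorem lemA (hn : 3 ≤ n) (hdep : DepOn n f) (hassoc : Assoc n f) (hsol : Solvable n f)
    {w sw : G} (hs : f (fun k => if k = n-1 then sw else w) = w) (b : G) (u : ℕ → G) :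
    f (fun k => if k = 0 then f (fun k => if k = 1 then b else if k = n-1 then sw else w)
        else if k = 1 then w else u k)
    = f (fun k => if k = 0 then w else if k = 1 then b else u k) := by
  set W : ℕ → G := fun k => if k = 0 then w else if k = 1 then b else
    if k = n-1 then sw else if k ≤ n then w else u (k - n + 1) with hW
  have hv0 : f (fun m => W (0+m)) = f (fun k => if k = 1 then b else if k = n-1 then sw else w) := by
    refine (hdep _ _ ?_)
    intro k hk; simp only [hW]; split_ifs <;> first | rfl | omega
  have hv1 : f (fun m => W (1+m)) = b := by
    refine (hdep _ (fun k => if k = 0 then b else if k = n-2 then sw else w) ?_).trans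
      (d3 hn hdep hassoc hsol hs b)
    intro k hk; simp only [hW]; split_ifs <;> first | rfl | omega
  refine assoc_app hdep hassoc W (by omega : 0 < n) (by omega : 1 < n) hv0 hv1 ?_ ?_
  · intro k hk; simp only [hW]; split_ifs <;> first | rfl | omega | (congr 1; omega)
  · intro k hk; simp only [hW]; split_ifs <;> first | rfl | omega | (congr 1; omega)

theorem claim_lem (hn : 3 ≤ n) (hdep : DepOn n f) (hassoc : Assoc n f) (hsol : Solvable n f)
    (sk : G → G) (hs : ∀ c : G, f (fun k => if k = n-1 then sk c else c) = c)
    (x : ℕ → G) (a : G) (M : ℕ → G) (hMn : M n = a)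
    (hMstep : ∀ j, j < n → M j = f (fun k => if k = 1 then M (j+1) else if k = n-1 then sk (x j) else x j)) :
    ∀ d, d ≤ n-1 → ∀ t : ℕ → G,
    f (fun k => if k = 0 then M (n-d) else if k ≤ d then x (n-d+k-1) else t k)
    = f (fun k => if k < d then x (n-d+k) else if k = d then a else t k) := by
  intro d
  induction d with
  | zero =>
    intro _ t
    refine hdep _ _ ?_
    intro k hk; split_ifs <;> first | rfl | omega | exact hMn
  | succ d ih =>
    intro hd t
    have hj1 : n - (d+1) + 1 = n - d := by omega
    have hMj : M (n-(d+1)) = f (fun k => if k = 1 then M (n-d)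
        else if k = n-1 then sk (x (n-(d+1))) else x (n-(d+1))) := by
      have h := hMstep (n-(d+1)) (by omega); rw [hj1] at h; exact h
    set w := x (n-(d+1)) with hw
    set u : ℕ → G := fun k => if k ≤ d+1 then x (n-(d+1)+k-1) else t k with hu
    have stepA : f (fun k => if k = 0 then M (n-(d+1)) else if k ≤ d+1 then x (n-(d+1)+k-1) else t k)
        = f (fun k => if k = 0 then w else if k = 1 then M (n-d) else u k) := by
      refine (hdep _ _ ?_).trans (lemA hn hdep hassoc hsol (hs w) (M (n-d)) u)
      intro k hk; simp only [hu]
      rcases eq_or_ne k 0 with rfl | h0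
      · simpa using hMj
      · split_ifs <;> first | rfl | omega | (congr 1; omega)
    set L2 : ℕ → G := fun k => if k = 0 then w else if k = 1 then M (n-d) else u k with hL2
    set R : ℕ → G := fun k => if k < d+1 then x (n-(d+1)+k) else if k = d+1 then a else t k with hR
    set t' : ℕ → G := fun k => if k = n-1 then w else t (1+k) with ht'
    set vmid := f (fun k => if k < d then x (n-d+k) else if k = d then a else t' k) with hv
    have hih : f (fun k => if k = 0 then M (n-d) else if k ≤ d then x (n-d+k-1) else t' k) = vmid :=
      ih (by omega) t'
    set Wc : ℕ → G := fun k => if k < n then L2 k else w with hWc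
    have hv0c : f (fun m => Wc (0+m)) = f L2 :=
      hdep _ _ (fun k hk => by simp only [hWc]; split_ifs <;> first | rfl | omega | (congr 1; omega))
    have hv1c : f (fun m => Wc (1+m)) = vmid := by
      refine (hdep _ _ ?_).trans hih
      intro k hk; simp only [hWc, hL2, hu, ht']; split_ifs <;> first | rfl | omega | (congr 1; omega)
    have pad1 : f (fun k => if k = 0 then f L2 else w) = f (fun k => if k = 1 then vmid else w) := by
      refine assoc_app hdep hassoc Wc (by omega : 0 < n) (by omega : 1 < n) hv0c hv1c ?_ ?_
      · intro k hk; simp only [hWc, hL2, hu]; split_ifs <;> first | rfl | omega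
      · intro k hk; simp only [hWc, hL2, hu]; split_ifs <;> first | rfl | omega
    set Wc' : ℕ → G := fun k => if k < n then R k else w with hWc'
    have hv0c' : f (fun m => Wc' (0+m)) = f R :=
      hdep _ _ (fun k hk => by simp only [hWc']; split_ifs <;> first | rfl | omega | (congr 1; omega))
    have hv1c' : f (fun m => Wc' (1+m)) = vmid := by
      refine (hdep _ _ ?_).trans hv.symm
      intro k hk; simp only [hWc', hR, ht']; split_ifs <;> first | rfl | omega | (congr 1; omega)
    have pad2 : f (fun k => if k = 0 then f R else w) = f (fun k => if k = 1 then vmid else w) := by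
      refine assoc_app hdep hassoc Wc' (by omega : 0 < n) (by omega : 1 < n) hv0c' hv1c' ?_ ?_
      · intro k hk; simp only [hWc', hR, hw]; split_ifs <;> first | rfl | omega | (congr 1; omega)
      · intro k hk; simp only [hWc', hR, hw]; split_ifs <;> first | rfl | omega | (congr 1; omega)
    have hc := cancelAt hdep hsol (by omega : 0 < n)
      (g := fun k => if k = 0 then f L2 else w)
      (g' := fun k => if k = 0 then f R else w)
      (fun k hk h0 => by split_ifs <;> first | rfl | omega)
      (pad1.trans pad2.symm)
    have hc' : f L2 = f R := by simpa using hc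
    exact stepA.trans hc'

end lemmas

end NAry

open NAry

theorem conjugation_action {G : Type*} (n : ℕ) (hn : 3 ≤ n) (f : (ℕ → G) → G)
    (hG : IsNAryGroup n f) (sk : G → G) (hsk : ∀ x, IsSkew n f x (sk x)) :
    IsAction n f
      (fun x a => f (fun k => if k = 1 then a else if k = n - 1 then sk x else x)) := by
  obtain ⟨hdep, hassoc, hsol⟩ := hG
  have hs : ∀ c : G, f (fun k => if k = n-1 then sk c else c) = c := by
    intro c
    refine (hdep _ _ ?_).trans (hsk c)
    intro k hk; rw [Function.update_apply]
  refine ⟨?_, ?_, ?_⟩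
  · -- part (i)
    intro x a
    set act : G → G → G := fun c b => f (fun k => if k = 1 then b else if k = n-1 then sk c else c)
      with hact
    set M : ℕ → G := fun j => (List.range' j (n - j)).foldr (fun i b => act (x i) b) a with hM
    have hMn : M n = a := by simp [hM]
    have hMstep : ∀ j, j < n → M j = act (x j) (M (j+1)) := by
      intro j hj
      have h1 : n - j = (n - (j+1)) + 1 := by omega
      rw [hM]; simp only [h1, List.range'_succ, List.foldr_cons]
    have hrange : (List.range n).foldr (fun i b => act (x i) b) a = M 0 := by
      rw [List.range_eq_range']; simp [hM]
    rw [hrange]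
    set y := f x with hy
    have hMstep' : ∀ j, j < n →
        M j = f (fun k => if k = 1 then M (j+1) else if k = n-1 then sk (x j) else x j) := by
      intro j hj; rw [hMstep j hj]
    have hcl := claim_lem hn hdep hassoc hsol sk hs x a M hMn hMstep' (n-1) (by omega) (fun _ => a)
    set Q := f (fun k => if k < n-1 then x (1+k) else if k = n-1 then a else a) with hQdef
    have hQ : f (fun k => if k = 0 then M 1 else if k ≤ n-1 then x k else a) = Q := by
      refine ((hdep _ _ ?_).trans hcl).trans ((hdep _ _ ?_).trans hQdef.symm)
      · intro k hk; split_ifs <;> first | rfl | omega | (congr 1; omega)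
      · intro k hk; split_ifs <;> first | rfl | omega | (congr 1; omega)
    have hM0 : M 0 = act (x 0) (M 1) := hMstep 0 (by omega)
    set u₁ : ℕ → G := fun k => if k ≤ n then x (k-1) else y with hu₁
    set W₁ : ℕ → G := fun k => if k = 0 then M 0 else u₁ k with hW₁
    set c₁ := f (fun m => W₁ (0+m)) with hc₁def
    have hv11 : f (fun m => W₁ (1+m)) = y := by
      refine (hdep _ x ?_).trans hy.symm
      intro k hk; simp only [hW₁, hu₁]; split_ifs <;> first | rfl | omega | (congr 1; omega)
    have res1 : f (fun k => if k = 0 then M 0 else y)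
        = f (fun k => if k = 0 then c₁ else if k = 1 then x (n-1) else y) := by
      refine assoc_app hdep hassoc W₁ (by omega : 1 < n) (by omega : 0 < n) hv11 hc₁def.symm ?_ ?_
      · intro k hk; simp only [hW₁, hu₁]; split_ifs <;> first | rfl | omega | (congr 1; omega)
      · intro k hk; simp only [hW₁, hu₁]; split_ifs <;> first | rfl | omega | (congr 1; omega)
    set W₃ : ℕ → G := fun k => if k = 0 then x 0 else if k = 1 then M 1 else u₁ k with hW₃
    have hc₁ : c₁ = f (fun m => W₃ (0+m)) := by
      rw [hc₁def]
      refine ((hdep _ _ ?_).trans (lemA hn hdep hassoc hsol (hs (x 0)) (M 1) u₁)).trans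
        (hdep _ _ ?_)
      · intro k hk; simp only [hW₁, hu₁]
        rcases eq_or_ne k 0 with rfl | h0
        · simpa using hM0.trans (by simp only [hact])
        · split_ifs <;> first | rfl | omega | (congr 1; omega)
      · intro k hk; simp only [hW₃, hu₁]; split_ifs <;> first | rfl | omega | (congr 1; omega)
    have hv31 : f (fun m => W₃ (1+m)) = Q := by
      refine (hdep _ _ ?_).trans hQ
      intro k hk; simp only [hW₃, hu₁]; split_ifs <;> first | rfl | omega | (congr 1; omega)
    have res2 : f (fun k => if k = 0 then c₁ else if k = 1 then x (n-1) else y)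
        = f (fun k => if k = 0 then x 0 else if k = 1 then Q else y) := by
      refine assoc_app hdep hassoc W₃ (by omega : 0 < n) (by omega : 1 < n) hc₁.symm hv31 ?_ ?_
      · intro k hk; simp only [hW₃, hu₁]; split_ifs <;> first | rfl | omega | (congr 1; omega)
      · intro k hk; simp only [hW₃, hu₁]; split_ifs <;> first | rfl | omega | (congr 1; omega)
    set W₂ : ℕ → G := fun k => if k ≤ n-1 then x k else if k = n then a else y with hW₂
    have hv20 : f (fun m => W₂ (0+m)) = y := by
      refine (hdep _ x ?_).trans hy.symm
      intro k hk; simp only [hW₂]; split_ifs <;> first | rfl | omega | (congr 1; omega)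
    have hv21 : f (fun m => W₂ (1+m)) = Q := by
      refine (hdep _ _ ?_).trans hQdef.symm
      intro k hk; simp only [hW₂]; split_ifs <;> first | rfl | omega | (congr 1; omega)
    have res3 : f (fun k => if k = 0 then y else if k = 1 then a else y)
        = f (fun k => if k = 0 then x 0 else if k = 1 then Q else y) := by
      refine assoc_app hdep hassoc W₂ (by omega : 0 < n) (by omega : 1 < n) hv20 hv21 ?_ ?_
      · intro k hk; simp only [hW₂]; split_ifs <;> first | rfl | omega | (congr 1; omega)
      · intro k hk; simp only [hW₂]; split_ifs <;> first | rfl | omega | (congr 1; omega)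
    have halpha : f (fun k => if k = 0 then act y a else y)
        = f (fun k => if k = 0 then y else if k = 1 then a else y) := by
      refine (hdep _ _ ?_).trans ((lemA hn hdep hassoc hsol (hs y) a (fun _ => y)).trans
        (hdep _ _ ?_))
      · intro k hk; simp only [hact]; try split_ifs <;> rfl
      · intro k hk; dsimp only; try split_ifs <;> first | rfl | omega
    have hfinal := cancelAt hdep hsol (by omega : 0 < n)
      (g := fun k => if k = 0 then act y a else y)
      (g' := fun k => if k = 0 then M 0 else y)
      (fun k hk h0 => by split_ifs <;> first | rfl | omega)
      (halpha.trans (res3.trans (res2.symm.trans res1.symm)))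
    simpa using hfinal
  · -- part (ii)
    intro a
    refine ⟨a, ?_⟩
    refine (hdep _ _ ?_).trans (hs a)
    intro k hk; split_ifs <;> first | rfl | omega
  · -- part (iii)
    intro x
    constructor
    · intro a b h
      have hc := cancelAt hdep hsol (by omega : 1 < n)
        (g := fun k => if k = 1 then a else if k = n-1 then sk x else x)
        (g' := fun k => if k = 1 then b else if k = n-1 then sk x else x)
        (fun k hk h1 => by split_ifs <;> first | rfl | omega) h
      simpa using hc
    · intro c
      obtain ⟨z, hz, -⟩ := hsol 1 (by omega) (fun k => if k = n-1 then sk x else x) c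
      exact ⟨z, (hdep _ _ (fun k hk => by
        rw [Function.update_apply]; try (dsimp only; split_ifs <;> first | rfl | omega))).trans hz⟩
end

section
/- In a semiabelian n-ary group (G,f), the conjugation relation a ∼ b ⟺ ∃ x ∈ G with f(x, a, x,...,x, x̄) = b (n−3 copies of x in the middle) is a congruence: if a_i ∼ b_i for i = 1,...,n, then f(a_1,...,a_n) ∼ f(b_1,...,b_n). -/
open NAry

section Aux
variable {G : Type*}

/-- collapse the window `[j, j+n-1]` of `x` into a single entry `f(x_j,…,x_{j+n-1})`. -/
def clp (n : ℕ) (f : (ℕ → G) → G) (j : ℕ) (x : ℕ → G) : ℕ → G :=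
  fun k => if k < j then x k else if k = j then f (fun m => x (j + m)) else x (k + n - 1)

/-- iterated (left-bracketed) long product with `k+1` applications of `f`. -/
def Dop (n : ℕ) (f : (ℕ → G) → G) : ℕ → (ℕ → G) → G
  | 0, x => f x
  | k+1, x => Dop n f k (clp n f 0 x)

/-- length of the sequence consumed by `Dop n f k`. -/
def Lb (n : ℕ) : ℕ → ℕ
  | 0 => n
  | k+1 => Lb n k + (n-1)

variable {n : ℕ} {f : (ℕ → G) → G}

lemma clp_lt {j k : ℕ} (h : k < j) (x : ℕ → G) : clp n f j x k = x k := by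
  unfold clp; rw [if_pos h]

lemma clp_self (j : ℕ) (x : ℕ → G) : clp n f j x j = f (fun m => x (j + m)) := by
  unfold clp; rw [if_neg (lt_irrefl j), if_pos rfl]

lemma clp_gt {j k : ℕ} (h : j < k) (x : ℕ → G) : clp n f j x k = x (k + n - 1) := by
  unfold clp; rw [if_neg (by omega), if_neg (by omega)]

lemma comp_eq_clp (n : ℕ) (f : (ℕ → G) → G) (x : ℕ → G) (j : ℕ) :
    Comp n f x j = f (clp n f j x) := rfl

lemma Lb_succ (n k : ℕ) : Lb n (k+1) = Lb n k + (n-1) := rfl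

lemma le_Lb (n : ℕ) : ∀ k, n ≤ Lb n k
  | 0 => le_rfl
  | k+1 => le_trans (le_Lb n k) (by rw [Lb_succ]; omega)

lemma Dop_ext (hn : 3 ≤ n) (hdep : DepOn n f) :
    ∀ (k : ℕ) (x y : ℕ → G), (∀ i < Lb n k, x i = y i) → Dop n f k x = Dop n f k y
  | 0, x, y, h => hdep x y h
  | k+1, x, y, h => by
      have hL := Lb_succ n k
      have hnL := le_Lb n k
      apply Dop_ext hn hdep k
      intro i hi
      rcases Nat.eq_zero_or_pos i with rfl | hipos
      · rw [clp_self, clp_self]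
        exact hdep _ _ fun m hm => h (0+m) (by omega)
      · rw [clp_gt hipos, clp_gt hipos]
        exact h _ (by omega)

lemma ga (hn : 3 ≤ n) (hdep : DepOn n f) (hassoc : Assoc n f) :
    ∀ (k : ℕ) (j : ℕ) (x : ℕ → G), j + n ≤ Lb n (k+1) →
      Dop n f (k+1) x = Dop n f k (clp n f j x)
  | 0, j, x, hj => by
      have hL : Lb n (0+1) = n + (n-1) := rfl
      show f (clp n f 0 x) = f (clp n f j x)
      exact hassoc x 0 j (by omega) (by omega)
  | k+1, j, x, hj => by
      have hL1 := Lb_succ n (k+1)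
      have hL0 := Lb_succ n k
      have hnL := le_Lb n k
      rcases Nat.lt_or_ge j n with hjn | hjn
      · -- overlapping windows: reduce to Assoc at the head
        show Dop n f k (clp n f 0 (clp n f 0 x)) = Dop n f k (clp n f 0 (clp n f j x))
        apply Dop_ext hn hdep k
        intro i hi
        rcases Nat.eq_zero_or_pos i with rfl | hipos
        · rw [clp_self, clp_self]
          simp only [Nat.zero_add]
          exact hassoc x 0 j (by omega) hjn
        · exact ((clp_gt hipos _).trans (clp_gt (by omega) _)).trans
            (((clp_gt hipos _).trans (clp_gt (by omega) _)).symm)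
      · -- disjoint windows
        show Dop n f (k+1) (clp n f 0 x) = Dop n f k (clp n f 0 (clp n f j x))
        rw [ga hn hdep hassoc k (j - (n-1)) (clp n f 0 x) (by omega)]
        apply Dop_ext hn hdep k
        intro i hi
        set j' := j - (n-1) with hj'
        have hj'1 : 1 ≤ j' := by omega
        rcases Nat.lt_trichotomy i j' with h | h | h
        · rcases Nat.eq_zero_or_pos i with rfl | hipos
          · refine ((clp_lt h _).trans (clp_self 0 x)).trans ?_
            refine (hdep _ _ fun m hm => (clp_lt (by omega) x).symm).trans
              (clp_self 0 (clp n f j x)).symm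
          · exact ((clp_lt h _).trans (clp_gt hipos _)).trans
              (((clp_gt hipos _).trans (clp_lt (by omega) _)).symm)
        · rw [h]
          refine (clp_self j' _).trans ?_
          have h2 : (clp n f 0 (clp n f j x)) j' = f (fun m => x (j + m)) := by
            refine (clp_gt hj'1 _).trans ?_
            have h3 : j' + n - 1 = j := by omega
            rw [h3, clp_self]
          rw [h2]
          refine hdep _ _ fun m hm => ?_
          refine (clp_gt (by omega : (0:ℕ) < j' + m) x).trans ?_
          congr 1
          omega
        · exact ((clp_gt h _).trans (clp_gt (by omega) _)).trans
            (((clp_gt (by omega : (0:ℕ) < i) _).trans (clp_gt (by omega) _)).symm)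

/-- transposition of entries `i` and `j` of a sequence. -/
def swp (i j : ℕ) (x : ℕ → G) : ℕ → G :=
  fun t => if t = i then x j else if t = j then x i else x t

lemma swp_fst (i j : ℕ) (x : ℕ → G) : swp i j x i = x j := by
  unfold swp; rw [if_pos rfl]

lemma swp_snd {i j : ℕ} (h : j ≠ i) (x : ℕ → G) : swp i j x j = x i := by
  unfold swp; rw [if_neg h, if_pos rfl]

lemma swp_other {i j t : ℕ} (h1 : t ≠ i) (h2 : t ≠ j) (x : ℕ → G) : swp i j x t = x t := by
  unfold swp; rw [if_neg h1, if_neg h2]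

lemma dswap (hn : 3 ≤ n) (hdep : DepOn n f) (hassoc : Assoc n f)
    (hsemi : ∀ x : ℕ → G,
      f x = f (fun k => if k = 0 then x (n - 1) else if k = n - 1 then x 0 else x k)) :
    ∀ (k i : ℕ) (x : ℕ → G), i + n ≤ Lb n k →
      Dop n f k x = Dop n f k (swp i (i + (n-1)) x)
  | 0, i, x, hb => by
      have hL : Lb n 0 = n := rfl
      have hi : i = 0 := by omega
      subst hi
      show f x = f (swp 0 (0 + (n-1)) x)
      rw [Nat.zero_add]
      exact hsemi x
  | k+1, i, x, hb => by
      rw [ga hn hdep hassoc k i x hb, ga hn hdep hassoc k i _ hb]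
      congr 1
      funext t
      rcases Nat.lt_trichotomy t i with h | h | h
      · rw [clp_lt h x, clp_lt h (swp i (i + (n-1)) x), swp_other (by omega) (by omega)]
      · rw [h, clp_self i x, clp_self i (swp i (i + (n-1)) x)]
        refine (hsemi (fun m => x (i + m))).trans ?_
        congr 1
        funext m
        by_cases hm0 : m = 0
        · subst hm0
          rw [if_pos rfl]
          show x (i + (n-1)) = swp i (i + (n-1)) x (i + 0)
          rw [Nat.add_zero, swp_fst]
        · rw [if_neg hm0]
          by_cases hm1 : m = n - 1
          · subst hm1
            rw [if_pos rfl]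
            show x (i + 0) = swp i (i + (n-1)) x (i + (n-1))
            rw [Nat.add_zero, swp_snd (by omega)]
          · rw [if_neg hm1, swp_other (by omega) (by omega)]
      · rw [clp_gt h x, clp_gt h (swp i (i + (n-1)) x), swp_other (by omega) (by omega)]

lemma dswapm (hn : 3 ≤ n) (hdep : DepOn n f) (hassoc : Assoc n f)
    (hsemi : ∀ x : ℕ → G,
      f x = f (fun k => if k = 0 then x (n - 1) else if k = n - 1 then x 0 else x k)) :
    ∀ (m k i : ℕ) (x : ℕ → G), i + m * (n-1) < Lb n k →
      Dop n f k x = Dop n f k (swp i (i + m * (n-1)) x)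
  | 0, k, i, x, hb => by
      have h0 : i + 0 * (n-1) = i := by omega
      rw [h0]
      congr 1
      funext t
      unfold swp
      split_ifs with h1 h2 <;> first | (rw [h1]) | rfl
  | m+1, k, i, x, hb => by
      have hmul : (m+1) * (n-1) = m * (n-1) + (n-1) := Nat.succ_mul m (n-1)
      have hd : n - 1 + 1 = n := by omega
      rcases Nat.eq_zero_or_pos m with rfl | hm
      · have h1 : i + 1 * (n-1) = i + (n-1) := by omega
        rw [h1]
        exact dswap hn hdep hassoc hsemi k i x (by omega)
      · set p := i + m * (n-1) with hp
        set q := i + (m+1) * (n-1) with hq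
        have hpq : q = p + (n-1) := by omega
        have hpos : 0 < m * (n-1) := Nat.mul_pos hm (by omega)
        have hip : i < p := by omega
        have hpq' : p < q := by omega
        have hqL : q < Lb n k := hb
        have s1 : Dop n f k x = Dop n f k (swp p q x) := by
          rw [hpq]; exact dswap hn hdep hassoc hsemi k p x (by omega)
        have s2 : Dop n f k (swp p q x) = Dop n f k (swp i p (swp p q x)) :=
          dswapm hn hdep hassoc hsemi m k i (swp p q x) (by omega)
        have s3 : Dop n f k (swp i p (swp p q x))
            = Dop n f k (swp p q (swp i p (swp p q x))) := by
          rw [hpq]; exact dswap hn hdep hassoc hsemi k p _ (by omega)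
        rw [s1, s2, s3]
        congr 1
        funext t
        by_cases ht1 : t = i
        · rw [ht1]
          exact (((swp_other (by omega) (by omega) _).trans (swp_fst i p _)).trans
            (swp_fst p q x)).trans (swp_fst i q x).symm
        · by_cases ht2 : t = p
          · rw [ht2]
            exact ((swp_fst p q _).trans ((swp_other (by omega) (by omega) _).trans
              (swp_snd (by omega) x))).trans (swp_other (by omega) (by omega) x).symm
          · by_cases ht3 : t = q
            · rw [ht3]
              exact ((swp_snd (by omega) _).trans ((swp_snd (by omega) _).trans
                (swp_other (by omega) (by omega) x))).trans (swp_snd (by omega) x).symm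
            · exact ((swp_other ht2 ht3 _).trans ((swp_other ht1 ht2 _).trans
                (swp_other ht2 ht3 x))).trans (swp_other ht1 ht3 x).symm

/-- row-major reading of an `n × n` matrix. -/
def rowM (n : ℕ) (M : ℕ → ℕ → G) : ℕ → G := fun p => M (p / n) (p % n)

lemma Lb_eq (n : ℕ) : ∀ k, Lb n k = n + k * (n-1)
  | 0 => by have h : Lb n 0 = n := rfl; omega
  | k+1 => by
      have h1 := Lb_eq n k
      have h2 := Lb_succ n k
      have h3 : (k+1) * (n-1) = k * (n-1) + (n-1) := Nat.succ_mul k (n-1)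
      omega

lemma collapse_rows (hn : 3 ≤ n) (hdep : DepOn n f) (hassoc : Assoc n f) :
    ∀ (s r : ℕ) (M : ℕ → ℕ → G), r + s = n →
      Dop n f s (fun i => if i < r then f (M i) else M (r + (i - r)/n) ((i - r) % n))
        = f (fun i => f (M i))
  | 0, r, M, h => by
      refine hdep _ _ fun i hi => ?_
      rw [if_pos (by omega)]
  | s+1, r, M, h => by
      have hnL := le_Lb n s
      have hL := Lb_succ n s
      have hb : r + n ≤ Lb n (s+1) := by omega
      rw [ga hn hdep hassoc s r _ hb]
      refine (Dop_ext hn hdep s _ _ ?_).trans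
        (collapse_rows hn hdep hassoc s (r+1) M (by omega))
      intro i hi
      rcases Nat.lt_trichotomy i r with hir | hir | hir
      · rw [clp_lt hir, if_pos hir, if_pos (by omega)]
      · rw [hir, clp_self, if_pos (by omega)]
        refine hdep _ _ fun m hm => ?_
        have h1 : ¬ (r + m < r) := by omega
        rw [if_neg h1]
        have h2 : r + m - r = m := by omega
        rw [h2, Nat.div_eq_of_lt hm, Nat.mod_eq_of_lt hm, Nat.add_zero]
      · rw [clp_gt hir]
        have h1 : ¬ (i + n - 1 < r) := by omega
        rw [if_neg h1, if_neg (by omega)]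
        have h2 : i + n - 1 - r = (i - (r+1)) + n := by omega
        rw [h2, Nat.add_div_right _ (by omega), Nat.add_mod_right]
        congr 1
        omega

lemma dop_rows (hn : 3 ≤ n) (hdep : DepOn n f) (hassoc : Assoc n f) (M : ℕ → ℕ → G) :
    Dop n f n (rowM n M) = f (fun i => f (M i)) := by
  refine (Dop_ext hn hdep n _ _ ?_).trans (collapse_rows hn hdep hassoc n 0 M (by omega))
  intro i hi
  have h1 : ¬ (i < 0) := by omega
  rw [if_neg h1]
  unfold rowM
  simp only [Nat.sub_zero, Nat.zero_add]

/-- partially transposed row-major reading: pairs `{i,j}` with `i≠j` that are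
lexicographically before `(r0, c0)` are already transposed. -/
def ptr (n : ℕ) (M : ℕ → ℕ → G) (r0 c0 : ℕ) : ℕ → G :=
  fun p =>
    if p / n ≠ p % n ∧ (min (p / n) (p % n) < r0 ∨
        (min (p / n) (p % n) = r0 ∧ max (p / n) (p % n) < c0))
    then M (p % n) (p / n) else M (p / n) (p % n)

lemma dv (hn : 3 ≤ n) {i j : ℕ} (hj : j < n) : (i * n + j) / n = i := by
  rw [Nat.add_comm, Nat.add_mul_div_right _ _ (by omega : 0 < n),
    Nat.div_eq_of_lt hj, Nat.zero_add]

lemma md (hn : 3 ≤ n) {i j : ℕ} (hj : j < n) : (i * n + j) % n = j := by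
  rw [Nat.add_comm, Nat.add_mul_mod_self_right, Nat.mod_eq_of_lt hj]

lemma ptr_apply (hn : 3 ≤ n) (M : ℕ → ℕ → G) (r0 c0 : ℕ) {i j : ℕ} (hj : j < n) :
    ptr n M r0 c0 (i * n + j)
      = if i ≠ j ∧ (min i j < r0 ∨ (min i j = r0 ∧ max i j < c0))
        then M j i else M i j := by
  unfold ptr
  rw [dv hn hj, md hn hj]

lemma step_c (hn : 3 ≤ n) (hdep : DepOn n f) (hassoc : Assoc n f)
    (hsemi : ∀ x : ℕ → G,
      f x = f (fun k => if k = 0 then x (n - 1) else if k = n - 1 then x 0 else x k))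
    (M : ℕ → ℕ → G) {r0 c0 : ℕ} (h1 : r0 < c0) (h2 : c0 < n) :
    Dop n f n (ptr n M r0 c0) = Dop n f n (ptr n M r0 (c0+1)) := by
  have hLb : Lb n n = n * n := by
    have := Lb_eq n n
    have h3 : n * (n-1) + n = n * n := by
      rw [← Nat.mul_succ]
      congr 1
      omega
    omega
  obtain ⟨t, rfl⟩ : ∃ t, c0 = r0 + (t + 1) := ⟨c0 - r0 - 1, by omega⟩
  set c0 := r0 + (t + 1) with hc0
  set p1 := r0 * n + c0 with hp1
  set p2 := c0 * n + r0 with hp2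
  have key : p2 = p1 + (t + 1) * (n - 1) := by
    rw [hp2, hp1, hc0]
    zify [show 1 ≤ n by omega]
    ring
  have hbd : p2 < Lb n n := by
    have h4 : (c0 + 1) * n = c0 * n + n := Nat.succ_mul c0 n
    have h5 : (c0 + 1) * n ≤ n * n := by
      rw [Nat.mul_comm n n]
      exact Nat.mul_le_mul_right n (by omega)
    omega
  have s1 : Dop n f n (ptr n M r0 c0) = Dop n f n (swp p1 p2 (ptr n M r0 c0)) := by
    rw [key]
    exact dswapm hn hdep hassoc hsemi (t+1) n p1 _ (by omega)
  rw [s1]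
  apply Dop_ext hn hdep
  intro p hp
  have hpos12 : 0 < (t+1) * (n-1) := Nat.mul_pos (by omega) (by omega)
  have hp12 : p1 ≠ p2 := by omega
  by_cases hP1 : p = p1
  · rw [hP1, swp_fst, hp2, hp1, ptr_apply hn M r0 (c0+1) (by omega : c0 < n),
      ptr_apply hn M r0 c0 (by omega : r0 < n)]
    rw [if_neg (by omega), if_pos (by omega)]
  · by_cases hP2 : p = p2
    · rw [hP2, swp_snd (by omega), hp1, hp2, ptr_apply hn M r0 (c0+1) (by omega : r0 < n),
        ptr_apply hn M r0 c0 (by omega : c0 < n)]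
      rw [if_neg (by omega), if_pos (by omega)]
    · rw [swp_other hP1 hP2]
      have hjn : p % n < n := Nat.mod_lt _ (by omega)
      have hin : p / n < n := by
        rw [Nat.div_lt_iff_lt_mul (by omega : 0 < n)]
        omega
      obtain ⟨i, j, hj, rfl⟩ : ∃ i j, j < n ∧ p = i * n + j :=
        ⟨p / n, p % n, hjn, by rw [Nat.add_comm, Nat.mul_comm, Nat.mod_add_div]⟩
      have hine : i < n := by
        have := dv hn (i := i) (j := j) hj
        omega
      have hnotpair : ¬ (min i j = r0 ∧ max i j = c0) := by
        rintro ⟨hmin, hmax⟩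
        rcases le_total i j with hij | hij
        · rw [min_eq_left hij] at hmin
          rw [max_eq_right hij] at hmax
          exact hP1 (by rw [hp1, hmin, hmax])
        · rw [min_eq_right hij] at hmin
          rw [max_eq_left hij] at hmax
          exact hP2 (by rw [hp2, hmin, hmax])
      rw [ptr_apply hn M r0 c0 hj, ptr_apply hn M r0 (c0+1) hj]
      by_cases hA : i ≠ j ∧ (min i j < r0 ∨ (min i j = r0 ∧ max i j < c0))
      · rw [if_pos hA, if_pos ⟨hA.1, by omega⟩]
      · rw [if_neg hA, if_neg (by omega)]

lemma inner_chain (hn : 3 ≤ n) (hdep : DepOn n f) (hassoc : Assoc n f)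
    (hsemi : ∀ x : ℕ → G,
      f x = f (fun k => if k = 0 then x (n - 1) else if k = n - 1 then x 0 else x k))
    (M : ℕ → ℕ → G) (r0 : ℕ) :
    ∀ t : ℕ, r0 + 1 + t ≤ n →
      Dop n f n (ptr n M r0 (r0+1)) = Dop n f n (ptr n M r0 (r0+1+t))
  | 0, _ => rfl
  | t+1, h => by
      rw [inner_chain hn hdep hassoc hsemi M r0 t (by omega)]
      have := step_c hn hdep hassoc hsemi M (show r0 < r0+1+t by omega)
        (show r0+1+t < n by omega)
      exact this

lemma advance_row (hn : 3 ≤ n) (hdep : DepOn n f) (M : ℕ → ℕ → G) (r0 : ℕ) :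
    Dop n f n (ptr n M r0 n) = Dop n f n (ptr n M (r0+1) (r0+1)) := by
  apply Dop_ext hn hdep
  intro p hp
  have hLb : Lb n n = n * n := by
    have := Lb_eq n n
    have h3 : n * (n-1) + n = n * n := by
      rw [← Nat.mul_succ]; congr 1; omega
    omega
  have hjn : p % n < n := Nat.mod_lt _ (by omega)
  have hin : p / n < n := by
    rw [Nat.div_lt_iff_lt_mul (by omega : 0 < n)]
    omega
  unfold ptr
  set i := p / n
  set j := p % n
  by_cases hA : i ≠ j ∧ (min i j < r0 ∨ (min i j = r0 ∧ max i j < n))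
  · rw [if_pos hA, if_pos ⟨hA.1, by omega⟩]
  · rw [if_neg hA, if_neg (by omega)]

lemma start_col (hn : 3 ≤ n) (hdep : DepOn n f) (M : ℕ → ℕ → G) (r0 : ℕ) :
    Dop n f n (ptr n M r0 r0) = Dop n f n (ptr n M r0 (r0+1)) := by
  congr 1
  funext p
  unfold ptr
  set i := p / n
  set j := p % n
  by_cases hA : i ≠ j ∧ (min i j < r0 ∨ (min i j = r0 ∧ max i j < r0))
  · rw [if_pos hA, if_pos ⟨hA.1, by omega⟩]
  · rw [if_neg hA, if_neg (by omega)]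

lemma outer_chain (hn : 3 ≤ n) (hdep : DepOn n f) (hassoc : Assoc n f)
    (hsemi : ∀ x : ℕ → G,
      f x = f (fun k => if k = 0 then x (n - 1) else if k = n - 1 then x 0 else x k))
    (M : ℕ → ℕ → G) :
    ∀ r0 : ℕ, r0 ≤ n →
      Dop n f n (ptr n M 0 0) = Dop n f n (ptr n M r0 r0)
  | 0, _ => rfl
  | r0+1, h => by
      rw [outer_chain hn hdep hassoc hsemi M r0 (by omega),
        start_col hn hdep M r0,
        inner_chain hn hdep hassoc hsemi M r0 (n - r0 - 1) (by omega)]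
      have he : r0 + 1 + (n - r0 - 1) = n := by omega
      rw [he, advance_row hn hdep M r0]

lemma dop_transpose (hn : 3 ≤ n) (hdep : DepOn n f) (hassoc : Assoc n f)
    (hsemi : ∀ x : ℕ → G,
      f x = f (fun k => if k = 0 then x (n - 1) else if k = n - 1 then x 0 else x k))
    (M : ℕ → ℕ → G) :
    Dop n f n (rowM n M) = Dop n f n (rowM n (fun a b => M b a)) := by
  have h0 : rowM n M = ptr n M 0 0 := by
    funext p
    unfold ptr rowM
    rw [if_neg (by
      rintro ⟨h1, h2 | ⟨h2, h3⟩⟩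
      exacts [Nat.not_lt_zero _ h2, Nat.not_lt_zero _ h3])]
  have h1 : ptr n M n n = rowM n (fun a b => M b a) := by
    funext p
    unfold ptr rowM
    have hjn : p % n < n := Nat.mod_lt _ (by omega)
    by_cases hij : p / n = p % n
    · rw [if_neg (fun h => h.1 hij), hij]
    · rw [if_pos ⟨hij, Or.inl (lt_of_le_of_lt (min_le_right _ _) hjn)⟩]
  rw [h0, outer_chain hn hdep hassoc hsemi M n le_rfl, h1]

/-- Mediality. -/
lemma medial (hn : 3 ≤ n) (hdep : DepOn n f) (hassoc : Assoc n f)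
    (hsemi : ∀ x : ℕ → G,
      f x = f (fun k => if k = 0 then x (n - 1) else if k = n - 1 then x 0 else x k))
    (M : ℕ → ℕ → G) :
    f (fun r => f (M r)) = f (fun c => f (fun r => M r c)) := by
  rw [← dop_rows hn hdep hassoc M, dop_transpose hn hdep hassoc hsemi M,
    dop_rows hn hdep hassoc]

end Aux

theorem conjugation_congruence {G : Type*} (n : ℕ) (hn : 3 ≤ n) (f : (ℕ → G) → G)
    (hG : IsNAryGroup n f)
    (hsemi : ∀ x : ℕ → G,
      f x = f (fun k => if k = 0 then x (n - 1) else if k = n - 1 then x 0 else x k))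
    (sk : G → G) (hsk : ∀ x, IsSkew n f x (sk x)) :
    let conj : G → G → Prop := fun a b =>
      ∃ x : G, f (fun k => if k = 1 then a else if k = n - 1 then sk x else x) = b
    ∀ a b : ℕ → G, (∀ i < n, conj (a i) (b i)) → conj (f a) (f b) := by
  intro conj a b hab
  obtain ⟨hdep, hassoc, hsolv⟩ := hG
  have hx : ∀ i : ℕ, ∃ xi : G, i < n →
      f (fun k => if k = 1 then a i else if k = n - 1 then sk xi else xi) = b i := by
    intro i
    by_cases h : i < n
    · obtain ⟨xi, hxi⟩ := hab i h
      exact ⟨xi, fun _ => hxi⟩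
    · exact ⟨a 0, fun h' => absurd h' h⟩
  choose x hxp using hx
  -- the skew of `f x` is `f (sk ∘ x)`
  have hskhom : f (Function.update (fun _ => f x) (n - 1) (f (fun i => sk (x i)))) = f x := by
    have hXupd : Function.update (fun _ => f x) (n-1) (f (fun i => sk (x i)))
        = fun k => if k = n-1 then f (fun i => sk (x i)) else f x := by
      funext k; simp [Function.update_apply]
    rw [hXupd]
    have hm := medial hn hdep hassoc hsemi (fun r c => if r = n-1 then sk (x c) else x c)
    have e1 : (fun k => if k = n-1 then f (fun i => sk (x i)) else f x)
        = (fun r => f (fun c => if r = n-1 then sk (x c) else x c)) := by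
      funext r
      by_cases hr : r = n-1
      · rw [if_pos hr]; congr 1; funext c; rw [if_pos hr]
      · rw [if_neg hr]; congr 1; funext c; rw [if_neg hr]
    rw [e1, hm]
    congr 1
    funext c
    refine Eq.trans ?_ (hsk (x c))
    congr 1
    funext r
    simp [Function.update_apply]
  have hskX : sk (f x) = f (fun i => sk (x i)) := by
    obtain ⟨z, hz, huniq⟩ := hsolv (n-1) (by omega) (fun _ => f x) (f x)
    have h1 := huniq _ (hsk (f x))
    have h2 := huniq _ hskhom
    rw [h1, h2]
  refine ⟨f x, ?_⟩
  have hm := medial hn hdep hassoc hsemi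
      (fun r c => if r = 1 then a c else if r = n-1 then sk (x c) else x c)
  have e2 : (fun k => if k = 1 then f a else if k = n - 1 then sk (f x) else f x)
      = (fun r => f (fun c => if r = 1 then a c else if r = n-1 then sk (x c) else x c)) := by
    funext r
    by_cases hr1 : r = 1
    · rw [if_pos hr1]; congr 1; funext c; rw [if_pos hr1]
    · rw [if_neg hr1]
      by_cases hr2 : r = n-1
      · rw [if_pos hr2, hskX]; congr 1; funext c; rw [if_neg hr1, if_pos hr2]
      · rw [if_neg hr2]; congr 1; funext c; rw [if_neg hr1, if_neg hr2]
  rw [e2, hm]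
  exact hdep _ _ fun c hc => hxp c hc
end

section
/- (Maschke's theorem for n-ary groups) Let G be a finite n-ary group and (V,p) a G-module over ℂ. Then every G-submodule W of V has a G-invariant complement: there is a G-submodule U with V = W ⊕ U. -/
open NAry

theorem maschke_nary {G : Type*} [Fintype G] (n : ℕ) (hn : 3 ≤ n) (f : (ℕ → G) → G)
    (hG : IsNAryGroup n f)
    {V : Type*} [AddCommGroup V] [Module ℂ V] [FiniteDimensional ℂ V]
    (act : G → V →ₗ[ℂ] V)
    (hact : IsAction n f (fun x v => act x v))
    (p : G) (hp : ∀ v : V, act p v = v)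
    (W : Submodule ℂ V) (hW : ∀ x : G, ∀ v ∈ W, act x v ∈ W) :
    ∃ U : Submodule ℂ V, (∀ x : G, ∀ v ∈ U, act x v ∈ U) ∧ IsCompl W U := by
  classical
  obtain ⟨hdep, hassoc, hsol⟩ := hG
  have hcard : (Fintype.card G : ℂ) ≠ 0 := by
    have : 0 < Fintype.card G := @Fintype.card_pos G _ ⟨p⟩
    exact_mod_cast Nat.cast_ne_zero.mpr this.ne'
  -- linear equivalences
  set e : G → (V ≃ₗ[ℂ] V) := fun x => LinearEquiv.ofBijective (act x) (hact.2.2 x) with he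
  have he_apply : ∀ x v, e x v = act x v := fun x v => rfl
  -- helper: foldr over a list where all entries act trivially
  have hfold_triv : ∀ (z : ℕ → G) (l : List ℕ), (∀ i ∈ l, ∀ b : V, act (z i) b = b) →
      ∀ v : V, l.foldr (fun i b => act (z i) b) v = v := by
    intro z l
    induction l with
    | nil => intro _ v; rfl
    | cons a l ih =>
      intro h v
      simp only [List.foldr_cons]
      rw [ih (fun i hi b => h i (List.mem_cons_of_mem _ hi) b) v]
      exact h a List.mem_cons_self v
  -- binary multiplication
  set mul : G → G → G := fun y x =>
    f (Function.update (fun k => if k = 0 then y else p) 1 x) with hmul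
  have hact_mul : ∀ y x v, act (mul y x) v = act y (act x v) := by
    intro y x v
    have hthis := hact.1 (Function.update (fun k => if k = 0 then y else p) 1 x) v
    simp only at hthis
    obtain ⟨m, rfl⟩ : ∃ m, n = m + 2 := ⟨n - 2, by omega⟩
    have h2 : ∀ i ∈ List.map (Nat.succ ∘ Nat.succ) (List.range m), ∀ b : V,
        act (Function.update (fun k => if k = 0 then y else p) 1 x i) b = b := by
      intro i hi b
      simp only [List.mem_map] at hi
      obtain ⟨j, _, rfl⟩ := hi
      have h1 : Function.update (fun k => if k = 0 then y else p) 1 x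
          (Nat.succ (Nat.succ j)) = p := by
        simp [Function.update]
      simp only [Function.comp_apply]
      rw [h1, hp]
    rw [hmul]
    simp only
    rw [hthis, List.range_succ_eq_map, List.range_succ_eq_map, List.map_cons, List.map_map,
      List.foldr_cons, List.foldr_cons, hfold_triv _ _ h2 v]
    simp [Function.update]
  have hmul_bij : ∀ y, Function.Bijective (mul y) := by
    intro y
    constructor
    · intro a b hab
      obtain ⟨z, hz, huniq⟩ := hsol 1 (by omega) (fun k => if k = 0 then y else p) (mul y a)
      have ha := huniq a rfl
      have hb := huniq b hab.symm
      rw [ha, hb]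
    · intro x₀
      obtain ⟨z, hz, _⟩ := hsol 1 (by omega) (fun k => if k = 0 then y else p) x₀
      exact ⟨z, hz⟩
  -- symm of e composed
  have he_symm_mul : ∀ y x w, (e (mul y x)).symm w = (e x).symm ((e y).symm w) := by
    intro y x w
    apply (e (mul y x)).injective
    rw [LinearEquiv.apply_symm_apply]
    rw [he_apply, hact_mul]
    rw [← he_apply x, ← he_apply y, LinearEquiv.apply_symm_apply, LinearEquiv.apply_symm_apply]
  -- act x maps W onto W
  have hmapW : ∀ x : G, W.map (act x) = W := by
    intro x
    have hle : W.map (act x) ≤ W := by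
      rintro _ ⟨w, hw, rfl⟩
      exact hW x w hw
    have heq : W.map (act x) = W.map (e x : V →ₗ[ℂ] V) := rfl
    have : Module.finrank ℂ (W.map (act x)) = Module.finrank ℂ W := by
      rw [heq, LinearEquiv.finrank_map_eq]
    exact Submodule.eq_of_le_of_finrank_eq hle this
  have hsymmW : ∀ (x : G), ∀ w ∈ W, (e x).symm w ∈ W := by
    intro x w hw
    have : w ∈ W.map (act x) := (hmapW x).symm ▸ hw
    obtain ⟨u, hu, hxu⟩ := this
    have : (e x).symm w = u := by
      apply (e x).injective
      rw [LinearEquiv.apply_symm_apply, he_apply]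
      exact hxu.symm
    rw [this]; exact hu
  -- a projection onto W
  obtain ⟨W', hWc⟩ := Submodule.exists_isCompl W
  set π : V →ₗ[ℂ] V := W.subtype ∘ₗ (W.projectionOnto W' hWc) with hπ
  have hπW : ∀ v : V, π v ∈ W := fun v => (W.projectionOnto W' hWc v).2
  have hπid : ∀ w ∈ W, π w = w := by
    intro w hw
    simp only [hπ, LinearMap.coe_comp, Function.comp_apply, Submodule.coe_subtype]
    rw [Submodule.linearProjOfIsCompl_apply_left hWc ⟨w, hw⟩]
  -- the averaged projection
  set T : V →ₗ[ℂ] V := (Fintype.card G : ℂ)⁻¹ •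
      ∑ x : G, (act x) ∘ₗ π ∘ₗ ((e x).symm : V →ₗ[ℂ] V) with hT
  have hT_apply : ∀ v : V, T v = (Fintype.card G : ℂ)⁻¹ •
      ∑ x : G, act x (π ((e x).symm v)) := by
    intro v
    simp [hT, LinearMap.sum_apply]
  have hTW : ∀ v : V, T v ∈ W := by
    intro v
    rw [hT_apply]
    exact Submodule.smul_mem _ _ (Submodule.sum_mem _ fun x _ =>
      hW x _ (hπW _))
  have hTid : ∀ w ∈ W, T w = w := by
    intro w hw
    rw [hT_apply]
    have : ∀ x : G, act x (π ((e x).symm w)) = w := by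
      intro x
      rw [hπid _ (hsymmW x w hw), ← he_apply, LinearEquiv.apply_symm_apply]
    rw [Finset.sum_congr rfl fun x _ => this x]
    rw [Finset.sum_const, Finset.card_univ, ← Nat.cast_smul_eq_nsmul ℂ, smul_smul,
      inv_mul_cancel₀ hcard, one_smul]
  have hTcomm : ∀ y v, T (act y v) = act y (T v) := by
    intro y v
    rw [hT_apply, hT_apply, map_smul, map_sum]
    congr 1
    rw [← Function.Bijective.sum_comp (hmul_bij y) (fun x => act x (π ((e x).symm (act y v))))]
    apply Finset.sum_congr rfl
    intro x _
    rw [hact_mul, he_symm_mul]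
    congr 2
    rw [← he_apply y, LinearEquiv.symm_apply_apply]
  -- the complement
  set Tc : V →ₗ[ℂ] W := T.codRestrict W hTW with hTc
  have hTc_proj : ∀ w : W, Tc w = w := by
    intro w
    apply Subtype.ext
    exact hTid w w.2
  refine ⟨LinearMap.ker Tc, ?_, LinearMap.isCompl_of_proj hTc_proj⟩
  intro y v hv
  simp only [LinearMap.mem_ker] at hv ⊢
  have hv0 : T v = 0 := congrArg Subtype.val hv
  apply Subtype.ext
  show T (act y v) = 0
  rw [hTcomm, hv0, map_zero]
end

section
/- Let (G,f) be an n-ary group, e ∈ G, and Γ: Ret_e(G) → GL(V) a group representation. If Γ also satisfies Γ(f(x_1,...,x_n)) = Γ(x_1)⋯Γ(x_n) for all x_i ∈ G, then Γ(x̄) = Γ(x)^{2−n} for every x ∈ G. -/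
open NAry

theorem rep_skew_pow {G : Type*} (n : ℕ) (hn : 3 ≤ n) (f : (ℕ → G) → G)
    (hG : IsNAryGroup n f) (e : G)
    {V : Type*} [AddCommGroup V] [Module ℂ V]
    (Γ : G → LinearMap.GeneralLinearGroup ℂ V)
    (hhom : ∀ x y : G,
      Γ (f (fun k => if k = 0 then x else if k = n - 1 then y else e)) = Γ x * Γ y)
    (hrep : ∀ x : ℕ → G, Γ (f x) = ((List.range n).map (fun i => Γ (x i))).prod)
    (x sx : G) (hs : IsSkew n f x sx) :
    Γ sx = (Γ x) ^ (2 - (n : ℤ)) := by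
  classical
  obtain ⟨m, rfl⟩ : ∃ m, n = m + 1 := ⟨n - 1, by omega⟩
  have hs' : f (Function.update (fun _ => x) m sx) = x := by
    simpa [IsSkew] using hs
  have key := hrep (Function.update (fun _ => x) m sx)
  rw [hs'] at key
  have hlist : (List.range (m + 1)).map (fun i => Γ (Function.update (fun _ => x) m sx i))
      = List.replicate m (Γ x) ++ [Γ sx] := by
    rw [List.range_succ, List.map_append]
    congr 1
    · have : ∀ i ∈ List.range m,
          Γ (Function.update (fun _ => x) m sx i) = Γ x := by
        intro i hi
        rw [List.mem_range] at hi
        rw [Function.update_of_ne (by omega)]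
      rw [List.map_congr_left this]
      simp
    · simp
  rw [hlist, List.prod_append, List.prod_replicate, List.prod_cons, List.prod_nil,
    mul_one] at key
  have h2 : (2 - ((m + 1 : ℕ) : ℤ)) = -(m : ℤ) + 1 := by push_cast; omega
  rw [h2, zpow_add, zpow_neg, zpow_natCast, zpow_one, eq_inv_mul_iff_mul_eq]
  exact key.symm
end

section
/- Let (G,f) be a ternary group and e ∈ G. A group representation Γ: Ret_e(G) → GL(V) satisfies Γ(f(x,y,z)) = Γ(x)Γ(y)Γ(z) for all x,y,z ∈ G if and only if Γ(x̄) = Γ(x)^{-1} for every x ∈ G. -/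
open NAry


private def t3 {G : Type*} (f : (ℕ → G) → G) (a b c : G) : G :=
  f (fun k => if k = 0 then a else if k = 1 then b else c)

theorem ternary_rep_iff {G : Type*} (f : (ℕ → G) → G)
    (hG : IsNAryGroup 3 f) (e : G) (sk : G → G) (hsk : ∀ x, IsSkew 3 f x (sk x))
    {V : Type*} [AddCommGroup V] [Module ℂ V]
    (Γ : G → LinearMap.GeneralLinearGroup ℂ V)
    (hhom : ∀ x y : G,
      Γ (f (fun k => if k = 0 then x else if k = 2 then y else e)) = Γ x * Γ y) :
    (∀ x y z : G,
        Γ (f (fun k => if k = 0 then x else if k = 1 then y else z)) = Γ x * Γ y * Γ z) ↔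
      (∀ x : G, Γ (sk x) = (Γ x)⁻¹) := by

  obtain ⟨hdep, hassoc, hsolv⟩ := hG
  have hcong : ∀ g h : ℕ → G, g 0 = h 0 → g 1 = h 1 → g 2 = h 2 → f g = f h := by
    intro g h h0 h1 h2
    apply hdep
    intro k hk
    interval_cases k <;> assumption
  have hassoc3 : ∀ a b c d w : G,
      t3 f (t3 f a b c) d w = t3 f a (t3 f b c d) w ∧
      t3 f a (t3 f b c d) w = t3 f a b (t3 f c d w) := by
    intro a b c d w
    set x : ℕ → G := fun k =>
      if k = 0 then a else if k = 1 then b else if k = 2 then c else if k = 3 then d else w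
      with hx
    have e0 : Comp 3 f x 0 = t3 f (t3 f a b c) d w := by
      unfold Comp t3
      apply hcong <;> norm_num [hx]
      apply hcong <;> norm_num [hx]
    have e1 : Comp 3 f x 1 = t3 f a (t3 f b c d) w := by
      unfold Comp t3
      apply hcong <;> norm_num [hx]
      apply hcong <;> norm_num [hx]
    have e2 : Comp 3 f x 2 = t3 f a b (t3 f c d w) := by
      unfold Comp t3
      apply hcong <;> norm_num [hx]
      apply hcong <;> norm_num [hx]
    exact ⟨by rw [← e0, ← e1]; exact hassoc x 0 1 (by norm_num) (by norm_num),
           by rw [← e1, ← e2]; exact hassoc x 1 2 (by norm_num) (by norm_num)⟩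
  have hA1 : ∀ a b c d w : G, t3 f (t3 f a b c) d w = t3 f a (t3 f b c d) w :=
    fun a b c d w => (hassoc3 a b c d w).1
  have hA2 : ∀ a b c d w : G, t3 f a (t3 f b c d) w = t3 f a b (t3 f c d w) :=
    fun a b c d w => (hassoc3 a b c d w).2
  have hsk3 : ∀ x : G, t3 f x x (sk x) = x := by
    intro x
    refine Eq.trans ?_ (hsk x)
    apply hcong <;> simp [Function.update, t3]
  have exist0 : ∀ a : G, ∃ b : G, t3 f b e e = a := by
    intro a
    obtain ⟨z, hz, -⟩ := hsolv 0 (by norm_num) (fun _ => e) a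
    exact ⟨z, Eq.trans (by apply hcong <;> simp [Function.update, t3]) hz⟩
  have exist2 : ∀ a : G, ∃ c : G, t3 f e e c = a := by
    intro a
    obtain ⟨z, hz, -⟩ := hsolv 2 (by norm_num) (fun _ => e) a
    exact ⟨z, Eq.trans (by apply hcong <;> simp [Function.update, t3]) hz⟩
  have inj2 : ∀ a b p q : G, t3 f a b p = t3 f a b q → p = q := by
    intro a b p q hpq
    obtain ⟨z, -, huniq⟩ := hsolv 2 (by norm_num) (fun k => if k = 0 then a else b) (t3 f a b q)
    have key : ∀ r : G, f (Function.update (fun k => if k = 0 then a else b) 2 r) = t3 f a b r := by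
      intro r; apply hcong <;> simp [Function.update, t3]
    have hp : p = z := huniq p (by
      show f (Function.update (fun k => if k = 0 then a else b) 2 p) = t3 f a b q
      rw [key, hpq])
    have hq : q = z := huniq q (by
      show f (Function.update (fun k => if k = 0 then a else b) 2 q) = t3 f a b q
      rw [key])
    exact hp.trans hq.symm
  have hu : t3 f e e (sk e) = e := hsk3 e
  have hrid : ∀ a : G, t3 f a e (sk e) = a := by
    intro a
    obtain ⟨b, hb⟩ := exist0 a
    calc t3 f a e (sk e) = t3 f (t3 f b e e) e (sk e) := by rw [hb]
      _ = t3 f b e (t3 f e e (sk e)) := by rw [hA1, hA2]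
      _ = a := by rw [hu, hb]
  have hlid : ∀ a : G, t3 f (sk e) e a = a := by
    obtain ⟨v, hv⟩ := exist0 e
    have hl : ∀ a : G, t3 f v e a = a := by
      intro a
      obtain ⟨c, hc⟩ := exist2 a
      calc t3 f v e a = t3 f v e (t3 f e e c) := by rw [hc]
        _ = t3 f (t3 f v e e) e c := by rw [← hA2, ← hA1]
        _ = a := by rw [hv, hc]
    have hveq : v = sk e := by
      have h1 : t3 f v e (sk e) = v := hrid v
      have h2 : t3 f v e (sk e) = sk e := hl (sk e)
      rw [← h1, h2]
    intro a
    rw [← hveq]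
    exact hl a
  have hmid : ∀ y : G, t3 f e (sk e) y = y := by
    intro y
    apply inj2 e e
    calc t3 f e e (t3 f e (sk e) y) = t3 f e (t3 f e e (sk e)) y := by rw [← hA2]
      _ = t3 f e e y := by rw [hu]
  have hform : ∀ x y z : G, t3 f (t3 f x e (t3 f (sk e) y (sk e))) e z = t3 f x y z := by
    intro x y z
    have h1 : t3 f x e (t3 f (sk e) y (sk e)) = t3 f x y (sk e) := by
      calc t3 f x e (t3 f (sk e) y (sk e)) = t3 f x (t3 f e (sk e) y) (sk e) := by rw [← hA2]
        _ = t3 f x y (sk e) := by rw [hmid]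
    rw [h1]
    calc t3 f (t3 f x y (sk e)) e z = t3 f x y (t3 f (sk e) e z) := by rw [hA1, hA2]
      _ = t3 f x y z := by rw [hlid]
  have hmul : ∀ a b : G, Γ (t3 f a e b) = Γ a * Γ b := by
    intro a b
    rw [← hhom a b]
    exact congrArg Γ (hcong _ _ (by simp [t3]) (by simp [t3]) (by simp [t3]))
  have key : ∀ x y z : G,
      f (fun k => if k = 0 then x else if k = 1 then y else z) = t3 f x y z := fun _ _ _ => rfl
  constructor
  · intro h x
    have h1 : Γ x = Γ x * Γ x * Γ (sk x) := by
      rw [← h x x (sk x), key, hsk3]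
    have h2 : Γ x * (Γ x * Γ (sk x)) = Γ x * 1 := by rw [← mul_assoc, ← h1, mul_one]
    exact eq_inv_of_mul_eq_one_right (mul_left_cancel h2)
  · intro h x y z
    rw [key, ← hform x y z, hmul, hmul]
    have h1 : Γ y * Γ (t3 f (sk e) y (sk e)) * Γ (sk y) = Γ y := by
      rw [← hmul, ← hmul, hform, hsk3]
    rw [h y] at h1
    rw [mul_inv_eq_iff_eq_mul] at h1
    rw [mul_left_cancel h1]
end

section
/- Let H be an n-ary subgroup of an n-ary group (G,f). The relation a ∼_H b ⟺ ∃ x,y ∈ H with b = f(a, x,...,x, y) (n−2 copies of x) is an equivalence relation on G, and a ∼_H b holds if and only if there exist x_2,...,x_n ∈ H with b = f(a, x_2,...,x_n). -/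
open NAry
namespace CosetProof

variable {G : Type*} {n : ℕ} {f : (ℕ → G) → G}

lemma comp_zero (hdep : DepOn n f) {S T : ℕ → G} {v : G}
    (hv : f S = v)
    (hT : ∀ k, k < n → T k = if k = 0 then v else S (k + n - 1)) :
    Comp n f S 0 = f T := by
  unfold Comp
  apply hdep
  intro k hk
  rw [hT k hk]
  rcases eq_or_ne k 0 with rfl | h0
  · rw [if_neg (by omega : ¬ (0:ℕ) < 0), if_pos rfl, if_pos rfl, ← hv]
    congr 1; funext m; rw [Nat.zero_add]
  · rw [if_neg (by omega : ¬ k < 0), if_neg h0, if_neg h0]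

lemma comp_last (hn : 1 ≤ n) (hdep : DepOn n f) {S T : ℕ → G} {v : G}
    (hv : f (fun m => S (n - 1 + m)) = v)
    (hT : ∀ k, k < n → T k = if k = n - 1 then v else S k) :
    Comp n f (S) (n - 1) = f T := by
  unfold Comp
  apply hdep
  intro k hk
  rw [hT k hk]
  rcases eq_or_ne k (n - 1) with rfl | h0
  · rw [if_neg (lt_irrefl _), if_pos rfl, if_pos rfl, hv]
  · rw [if_pos (by omega), if_neg h0]

end CosetProof

namespace CosetProof

variable {G : Type*} {n : ℕ} {f : (ℕ → G) → G} {sk : G → G}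

lemma skew_id (hsk : ∀ x, IsSkew n f x (sk x)) (x : G) :
    f (fun k => if k = n - 1 then sk x else x) = x := by
  have e : (fun k => if k = n - 1 then sk x else x)
      = Function.update (fun _ => x) (n - 1) (sk x) := by
    funext k; rw [Function.update_apply]
  rw [e]; exact hsk x

/-- the skew element also works in position 1: `f(x, sk x, x, …, x) = x`. -/
lemma dorne1 (hn : 3 ≤ n) (hG : IsNAryGroup n f) (hsk : ∀ x, IsSkew n f x (sk x)) (x : G) :
    f (fun k => if k = 1 then sk x else x) = x := by
  obtain ⟨hdep, hassoc, hsolv⟩ := hG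
  set S : ℕ → G := fun k => if k = n - 1 then sk x else x with hS
  have c0 : Comp n f S 0 = f (fun _ => x) := by
    refine comp_zero hdep (skew_id hsk x) ?_
    intro k hk
    simp only [hS]
    split_ifs <;> first | rfl | omega
  have c2 : Comp n f S (n - 2) =
      f (Function.update (fun _ => x) (n - 2) (f (fun k => if k = 1 then sk x else x))) := by
    unfold Comp
    apply hdep
    intro k hk
    rw [Function.update_apply]
    rcases eq_or_ne k (n - 2) with rfl | h0
    · rw [if_neg (lt_irrefl _), if_pos rfl, if_pos rfl]
      apply hdep
      intro m hm
      simp only [hS]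
      split_ifs <;> first | rfl | omega
    · rw [if_neg h0]
      simp only [hS]
      split_ifs <;> first | rfl | omega
  have hA := hassoc S 0 (n - 2) (by omega) (by omega)
  rw [c0, c2] at hA
  obtain ⟨z, hz, hu⟩ := hsolv (n - 2) (by omega) (fun _ => x) (f (fun _ => x))
  have e1 := hu _ hA.symm
  have e2 := hu x (show f (Function.update (fun _ => x) (n - 2) x) = f (fun _ => x) from by
    congr 1; funext k; rw [Function.update_apply]; split_ifs <;> rfl)
  rw [e1, e2]

/-- `(x^{n-2}, sk x)` is right-neutral. -/
lemma rightNeutral (hn : 3 ≤ n) (hG : IsNAryGroup n f) (hsk : ∀ x, IsSkew n f x (sk x))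
    (a x : G) :
    f (fun k => if k = 0 then a else if k = n - 1 then sk x else x) = a := by
  obtain ⟨hdep, hassoc, hsolv⟩ := hG
  obtain ⟨c, hc, -⟩ := hsolv 0 (by omega) (fun _ => x) a
  set S : ℕ → G := fun k => if k = 0 then c else if k = 2 * n - 2 then sk x else x with hS
  have hv0 : f S = a := by
    rw [← hc]
    apply hdep
    intro k hk
    simp only [hS, Function.update_apply]
    split_ifs <;> first | rfl | omega
  have c0 : Comp n f S 0 = f (fun k => if k = 0 then a else if k = n - 1 then sk x else x) := by
    refine comp_zero hdep hv0 ?_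
    intro k hk
    simp only [hS]
    split_ifs <;> first | rfl | omega
  have hvl : f (fun m => S (n - 1 + m)) = x := by
    rw [← skew_id hsk x]
    apply hdep
    intro m hm
    simp only [hS]
    split_ifs <;> first | rfl | omega
  have cl : Comp n f S (n - 1) = f (Function.update (fun _ => x) 0 c) := by
    refine comp_last (by omega) hdep hvl ?_
    intro k hk
    simp only [hS, Function.update_apply]
    split_ifs <;> first | rfl | omega
  have hA := hassoc S 0 (n - 1) (by omega) (by omega)
  rw [c0, cl, hc] at hA
  exact hA

/-- `(g, sk g, g^{n-3})` is left-neutral. -/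
lemma leftNeutral (hn : 3 ≤ n) (hG : IsNAryGroup n f) (hsk : ∀ x, IsSkew n f x (sk x))
    (g b : G) :
    f (fun k => if k = 0 then g else if k = 1 then sk g else if k = n - 1 then b else g) = b := by
  obtain ⟨hdep, hassoc, hsolv⟩ := hG
  obtain ⟨c, hc, -⟩ := hsolv (n - 1) (by omega) (fun _ => g) b
  set S : ℕ → G := fun k => if k = 1 then sk g else if k = 2 * n - 2 then c else g with hS
  have hv0 : f S = g := by
    rw [← dorne1 hn ⟨hdep, hassoc, hsolv⟩ hsk g]
    apply hdep
    intro k hk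
    simp only [hS]
    split_ifs <;> first | rfl | omega
  have c0 : Comp n f S 0 = f (Function.update (fun _ => g) (n - 1) c) := by
    refine comp_zero hdep hv0 ?_
    intro k hk
    simp only [hS, Function.update_apply]
    split_ifs <;> first | rfl | omega
  have hvl : f (fun m => S (n - 1 + m)) = b := by
    rw [← hc]
    apply hdep
    intro m hm
    simp only [hS, Function.update_apply]
    split_ifs <;> first | rfl | omega
  have cl : Comp n f S (n - 1) =
      f (fun k => if k = 0 then g else if k = 1 then sk g else if k = n - 1 then b else g) := by
    refine comp_last (by omega) hdep hvl ?_
    intro k hk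
    simp only [hS]
    split_ifs <;> first | rfl | omega
  have hA := hassoc S 0 (n - 1) (by omega) (by omega)
  rw [c0, cl, hc] at hA
  exact hA.symm


/-- Composing: `f(f(a,xs₁…xs_{n-1}), p^{n-2}, q) = f(a, xs₁…xs_{n-2}, f(xs_{n-1}, p^{n-2}, q))`. -/
lemma compose (hn : 3 ≤ n) (hG : IsNAryGroup n f)
    (a : G) (xs : ℕ → G) (p q : G) :
    f (fun k => if k = 0 then f (fun j => if j = 0 then a else xs j)
        else if k = n - 1 then q else p)
    = f (fun k => if k = 0 then a else if k = n - 1 then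
        f (fun m => if m = 0 then xs (n - 1) else if m = n - 1 then q else p) else xs k) := by
  obtain ⟨hdep, hassoc, hsolv⟩ := hG
  set S : ℕ → G := fun k => if k = 0 then a else if k ≤ n - 1 then xs k
      else if k = 2 * n - 2 then q else p with hS
  have hv0 : f S = f (fun j => if j = 0 then a else xs j) := by
    apply hdep
    intro k hk
    simp only [hS]
    split_ifs <;> first | rfl | omega
  have c0 : Comp n f S 0 = f (fun k => if k = 0 then f (fun j => if j = 0 then a else xs j)
      else if k = n - 1 then q else p) := by
    refine comp_zero hdep hv0 ?_
    intro k hk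
    simp only [hS]
    split_ifs <;> first | rfl | omega
  have hvl : f (fun m => S (n - 1 + m))
      = f (fun m => if m = 0 then xs (n - 1) else if m = n - 1 then q else p) := by
    apply hdep
    intro m hm
    simp only [hS]
    split_ifs with h1 h2 h3 <;> first | rfl | omega | (congr 1; omega)
  have cl : Comp n f S (n - 1) = f (fun k => if k = 0 then a else if k = n - 1 then
      f (fun m => if m = 0 then xs (n - 1) else if m = n - 1 then q else p) else xs k) := by
    refine comp_last (by omega) hdep hvl ?_
    intro k hk
    simp only [hS]
    split_ifs <;> first | rfl | omega
  have hA := hassoc S 0 (n - 1) (by omega) (by omega)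
  rw [c0, cl] at hA
  exact hA

/-- Collapsing a general product to the special two-element form. -/
lemma collapse (hn : 3 ≤ n) (hG : IsNAryGroup n f) (hsk : ∀ x, IsSkew n f x (sk x))
    (a h : G) (xs : ℕ → G) :
    f (fun k => if k = 0 then a else xs k)
    = f (fun k => if k = 0 then a else if k = n - 1 then
        f (fun m => if m = 0 then sk h else xs m) else h) := by
  obtain ⟨hdep, hassoc, hsolv⟩ := hG
  set S : ℕ → G := fun k => if k = 0 then a else if k < n - 1 then h
      else if k = n - 1 then sk h else xs (k - (n - 1)) with hS
  have hv0 : f S = a := by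
    rw [← rightNeutral hn ⟨hdep, hassoc, hsolv⟩ hsk a h]
    apply hdep
    intro k hk
    simp only [hS]
    split_ifs <;> first | rfl | omega
  have c0 : Comp n f S 0 = f (fun k => if k = 0 then a else xs k) := by
    refine comp_zero hdep hv0 ?_
    intro k hk
    simp only [hS]
    split_ifs <;> first | rfl | omega | (congr 1; omega)
  have hvl : f (fun m => S (n - 1 + m)) = f (fun m => if m = 0 then sk h else xs m) := by
    apply hdep
    intro m hm
    simp only [hS]
    split_ifs <;> first | rfl | omega | (congr 1; omega)
  have cl : Comp n f S (n - 1) = f (fun k => if k = 0 then a else if k = n - 1 then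
      f (fun m => if m = 0 then sk h else xs m) else h) := by
    refine comp_last (by omega) hdep hvl ?_
    intro k hk
    simp only [hS]
    split_ifs <;> first | rfl | omega
  have hA := hassoc S 0 (n - 1) (by omega) (by omega)
  rw [c0, cl] at hA
  exact hA


/-- Key step for symmetry: with `g = f(y, h^{n-1})` and
`y' = f(h, sk g, g^{n-3}, sk h)` we get `f(y, h^{n-2}, y') = sk h`. -/
lemma symmKey (hn : 3 ≤ n) (hG : IsNAryGroup n f) (hsk : ∀ x, IsSkew n f x (sk x))
    (h y g : G) (hg : f (fun k => if k = 0 then y else h) = g) :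
    f (fun k => if k = 0 then y else if k = n - 1 then
        f (fun j => if j = 0 then h else if j = 1 then sk g else if j = n - 1 then sk h else g)
      else h) = sk h := by
  obtain ⟨hdep, hassoc, hsolv⟩ := hG
  set S : ℕ → G := fun k => if k = 0 then y else if k ≤ n - 1 then h
      else if k = n then sk g else if k = 2 * n - 2 then sk h else g with hS
  have hv0 : f S = g := by
    rw [← hg]
    apply hdep
    intro k hk
    simp only [hS]
    split_ifs <;> first | rfl | omega
  have c0 : Comp n f S 0 = f (fun k => if k = 0 then g else if k = 1 then sk g
      else if k = n - 1 then sk h else g) := by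
    refine comp_zero hdep hv0 ?_
    intro k hk
    simp only [hS]
    split_ifs <;> first | rfl | omega
  have hvl : f (fun m => S (n - 1 + m))
      = f (fun j => if j = 0 then h else if j = 1 then sk g
          else if j = n - 1 then sk h else g) := by
    apply hdep
    intro m hm
    simp only [hS]
    split_ifs <;> first | rfl | omega
  have cl : Comp n f S (n - 1) = f (fun k => if k = 0 then y else if k = n - 1 then
      f (fun j => if j = 0 then h else if j = 1 then sk g else if j = n - 1 then sk h else g)
      else h) := by
    refine comp_last (by omega) hdep hvl ?_
    intro k hk
    simp only [hS]
    split_ifs <;> first | rfl | omega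
  have hA := hassoc S 0 (n - 1) (by omega) (by omega)
  rw [c0, cl, leftNeutral hn ⟨hdep, hassoc, hsolv⟩ hsk g (sk h)] at hA
  exact hA.symm


lemma compose' (hn : 3 ≤ n) (hG : IsNAryGroup n f)
    (a : G) (xs : ℕ → G) (p q B W : G)
    (hB : f (fun j => if j = 0 then a else xs j) = B)
    (hW : f (fun m => if m = 0 then xs (n - 1) else if m = n - 1 then q else p) = W) :
    f (fun k => if k = 0 then B else if k = n - 1 then q else p)
    = f (fun k => if k = 0 then a else if k = n - 1 then W else xs k) := by
  simp only [← hB, ← hW]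
  exact compose hn hG a xs p q

end CosetProof

open CosetProof

theorem coset_relation_equivalence {G : Type*} (n : ℕ) (hn : 3 ≤ n) (f : (ℕ → G) → G)
    (hG : IsNAryGroup n f) (sk : G → G) (hsk : ∀ x, IsSkew n f x (sk x))
    (H : Set G) (hne : H.Nonempty)
    (hcl : ∀ x : ℕ → G, (∀ k < n, x k ∈ H) → f x ∈ H)
    (hskH : ∀ x ∈ H, sk x ∈ H) :
    let R : G → G → Prop := fun a b =>
      ∃ x ∈ H, ∃ y ∈ H, b = f (fun k => if k = 0 then a else if k = n - 1 then y else x)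
    Equivalence R ∧
      ∀ a b : G, R a b ↔
        ∃ x : ℕ → G, (∀ k, 1 ≤ k → k < n → x k ∈ H) ∧ b = f (Function.update x 0 a) := by
  intro R
  obtain ⟨h, hh⟩ := hne
  have upd_eq : ∀ (xs : ℕ → G) (a : G),
      (fun k => if k = 0 then a else xs k) = Function.update xs 0 a := fun xs a =>
    funext fun k => (Function.update_apply xs 0 a k).symm
  -- R implies the general form
  have R_to_gen : ∀ a b, R a b → ∃ xs : ℕ → G,
      (∀ k, 1 ≤ k → k < n → xs k ∈ H) ∧ b = f (Function.update xs 0 a) := by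
    rintro a b ⟨x, hx, y, hy, hb⟩
    refine ⟨fun k => if k = n - 1 then y else x, ?_, ?_⟩
    · intro k h1 h2
      show (if k = n - 1 then y else x) ∈ H
      split_ifs
      exacts [hy, hx]
    · rw [← upd_eq]
      exact hb.trans (congrArg f (funext fun k => by
        show _ = if k = 0 then a else if k = n - 1 then y else x
        rfl))
  -- the general form implies the fixed-`h` special form
  have gen_to_h : ∀ a b, (∃ xs : ℕ → G,
      (∀ k, 1 ≤ k → k < n → xs k ∈ H) ∧ b = f (Function.update xs 0 a)) →
      ∃ y ∈ H, b = f (fun k => if k = 0 then a else if k = n - 1 then y else h) := by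
    rintro a b ⟨xs, hxs, hb⟩
    refine ⟨f (fun m => if m = 0 then sk h else xs m), hcl _ ?_, ?_⟩
    · intro k hk
      show (if k = 0 then sk h else xs k) ∈ H
      split_ifs with h0
      · exact hskH h hh
      · exact hxs k (by omega) hk
    · rw [← upd_eq] at hb
      exact hb.trans (collapse hn hG hsk a h xs)
  have h_to_R : ∀ a b, (∃ y ∈ H,
      b = f (fun k => if k = 0 then a else if k = n - 1 then y else h)) → R a b := by
    rintro a b ⟨y, hy, hb⟩
    exact ⟨h, hh, y, hy, hb⟩
  have hrefl : ∀ a, R a a := fun a =>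
    ⟨h, hh, sk h, hskH h hh, (rightNeutral hn hG hsk a h).symm⟩
  have hsymm : ∀ a b, R a b → R b a := by
    intro a b hab
    obtain ⟨y, hy, hb⟩ := gen_to_h a b (R_to_gen a b hab)
    set g := f (fun k => if k = 0 then y else h) with hgdef
    have hg : g ∈ H := hcl _ (by
      intro k hk
      show (if k = 0 then y else h) ∈ H
      split_ifs
      exacts [hy, hh])
    set y' := f (fun j => if j = 0 then h else if j = 1 then sk g
        else if j = n - 1 then sk h else g) with hy'def
    have hy' : y' ∈ H := hcl _ (by
      intro k hk
      show (if k = 0 then h else if k = 1 then sk g else if k = n - 1 then sk h else g) ∈ H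
      split_ifs
      exacts [hh, hskH g hg, hskH h hh, hg])
    refine h_to_R b a ⟨y', hy', ?_⟩
    have key : f (fun k => if k = 0 then y else if k = n - 1 then y' else h) = sk h :=
      symmKey hn hG hsk h y g rfl
    have hW : f (fun m => if m = 0 then (fun k => if k = n - 1 then y else h) (n - 1)
        else if m = n - 1 then y' else h) = sk h := by
      refine Eq.trans ?_ key
      exact congrArg f (funext fun m => by
        show (if m = 0 then (if n - 1 = n - 1 then y else h) else if m = n - 1 then y' else h) = _
        rw [if_pos (rfl : n - 1 = n - 1)])
    have step1 := compose' hn hG a (fun k => if k = n - 1 then y else h) h y' b (sk h)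
      hb.symm hW
    have step2 : f (fun k => if k = 0 then a else if k = n - 1 then sk h
        else (fun k => if k = n - 1 then y else h) k) =
        f (fun k => if k = 0 then a else if k = n - 1 then sk h else h) :=
      congrArg f (funext fun k => by
        show (if k = 0 then a else if k = n - 1 then sk h else if k = n - 1 then y else h) = _
        split_ifs <;> rfl)
    exact ((step1.trans step2).trans (rightNeutral hn hG hsk a h)).symm
  have htrans : ∀ a b c, R a b → R b c → R a c := by
    intro a b c hab hbc
    obtain ⟨xs, hxs, hb⟩ := R_to_gen a b hab
    obtain ⟨x₂, hx₂, y₂, hy₂, hc⟩ := hbc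
    set W := f (fun m => if m = 0 then xs (n - 1) else if m = n - 1 then y₂ else x₂) with hWdef
    have hWH : W ∈ H := hcl _ (by
      intro k hk
      show (if k = 0 then xs (n - 1) else if k = n - 1 then y₂ else x₂) ∈ H
      split_ifs
      exacts [hxs (n - 1) (by omega) (by omega), hy₂, hx₂])
    rw [← upd_eq] at hb
    have hcomp := compose' hn hG a xs x₂ y₂ b W hb.symm rfl
    refine h_to_R a c (gen_to_h a c ⟨fun k => if k = n - 1 then W else xs k, ?_, ?_⟩)
    · intro k h1 h2
      show (if k = n - 1 then W else xs k) ∈ H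
      split_ifs
      exacts [hWH, hxs k h1 h2]
    · rw [← upd_eq]
      refine (hc.trans hcomp).trans (congrArg f (funext fun k => by
        show (if k = 0 then a else if k = n - 1 then W else xs k) =
          if k = 0 then a else if k = n - 1 then W else xs k
        rfl))
  exact ⟨⟨hrefl, fun {a b} hab => hsymm a b hab, fun {a b c} hab hbc => htrans a b c hab hbc⟩,
    fun a b => ⟨R_to_gen a b, fun hgen => h_to_R a b (gen_to_h a b hgen)⟩⟩
end
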